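/- arXiv:2002.04912 — 4 statements merged into one kernel-verified Lean document; each statement's English description precedes it below -/
import Mathlib

section
/- Let p be an odd prime, let n, k, l be positive integers with l | k and k/l even, and set d = gcd(n,k), e = gcd(n,l), L = lcm(d,l). Suppose d/e is even and p does not divide k/L. Let a ∈ 𝔽_{p^n}. Then the equation S_l^k(X) = a has a solution in 𝔽_{p^n} if and only if T_e^{2e}(T_d^n(a)) = 0. Moreover, in that case, for any δ ∈ 𝔽_{p^n} with T_d^n(δ) = 1 and any δ₁ ∈ 𝔽_{p^d} with T_{2e}^d(δ₁) = 1, setting y₀ = Σ_{i=0}^{n/d−2} Σ_{j=i+1}^{n/d−1} δ^{p^{kj}} (T_l^{2l}(a))^{p^{ki}}, the element x₀ = y₀ + (L/(2k))·(a − S_l^k(y₀))·δ₁ lies in 𝔽_{p^n} and satisfies S_l^k(x₀) = a, where L/(2k) denotes the element (2k/L)^{−1} in 𝔽_p. -/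
open Finset

/-- `Tmap p u v x = Σ_{i=0}^{v/u - 1} x^{p^{u i}}` on the algebraic closure of `𝔽_p`. -/
noncomputable def Tmap (p : ℕ) [Fact p.Prime] (u v : ℕ) (x : AlgebraicClosure (ZMod p)) :
    AlgebraicClosure (ZMod p) :=
  ∑ i ∈ Finset.range (v / u), x ^ p ^ (u * i)

/-- `Smap p u v x = Σ_{i=0}^{v/u - 1} (-1)^i x^{p^{u i}}` on the algebraic closure of `𝔽_p`. -/
noncomputable def Smap (p : ℕ) [Fact p.Prime] (u v : ℕ) (x : AlgebraicClosure (ZMod p)) :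
    AlgebraicClosure (ZMod p) :=
  ∑ i ∈ Finset.range (v / u), (-1 : AlgebraicClosure (ZMod p)) ^ i * x ^ p ^ (u * i)

/-- `Ffield p m` is the subfield `𝔽_{p^m} = {x : x^{p^m} = x}` of the algebraic closure of `𝔽_p`. -/
def Ffield (p : ℕ) [Fact p.Prime] (m : ℕ) : Set (AlgebraicClosure (ZMod p)) :=
  {x | x ^ p ^ m = x}

section helpers
variable {p : ℕ} [Fact p.Prime]
local notation "F" => AlgebraicClosure (ZMod p)

private lemma hp1 : 1 < p := (Fact.out : p.Prime).one_lt

private lemma ppa (x : F) (s t : ℕ) : (x ^ p ^ s) ^ p ^ t = x ^ p ^ (s + t) := by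
  rw [← pow_mul, ← pow_add]

private lemma sum_ppow (m : ℕ) {ι : Type*} (s : Finset ι) (f : ι → F) :
    (∑ i ∈ s, f i) ^ p ^ m = ∑ i ∈ s, f i ^ p ^ m := by
  have h := map_sum (iterateFrobenius F p m) f s
  simp only [iterateFrobenius_def] at h
  exact h

private lemma natCast_ppow (m c : ℕ) : ((c : ℕ) : F) ^ p ^ m = c := by
  have := map_natCast (iterateFrobenius F p m) c
  rwa [iterateFrobenius_def] at this

private lemma neg_one_ppow (hp2 : p ≠ 2) (m : ℕ) : ((-1 : F)) ^ p ^ m = -1 :=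
  Odd.neg_one_pow (Odd.pow ((Fact.out : p.Prime).odd_of_ne_two hp2))

private lemma pow_pmod {x : F} {N : ℕ} (hx : x ^ p ^ N = x) (t : ℕ) :
    x ^ p ^ t = x ^ p ^ (t % N) := by
  conv_lhs => rw [← Nat.div_add_mod t N]
  generalize t / N = q
  induction q with
  | zero => simp
  | succ q ih =>
    have h : N * (q + 1) + t % N = N + (N * q + t % N) := by ring
    rw [h, ← ppa x N (N * q + t % N), hx]
    exact ih

private lemma pow_pmodeq {x : F} {N : ℕ} (hx : x ^ p ^ N = x) {s t : ℕ}
    (h : s ≡ t [MOD N]) : x ^ p ^ s = x ^ p ^ t := by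
  have h' : s % N = t % N := h
  rw [pow_pmod hx s, pow_pmod hx t, h']

private lemma Ff_mem {m : ℕ} {x : F} : x ∈ Ffield p m ↔ x ^ p ^ m = x := Iff.rfl

private lemma Ff_ppow {m : ℕ} (t : ℕ) {x : F} (hx : x ∈ Ffield p m) :
    x ^ p ^ t ∈ Ffield p m := by
  show (x ^ p ^ t) ^ p ^ m = x ^ p ^ t
  rw [ppa, add_comm, ← ppa, hx]

private lemma Ff_mono {u v : ℕ} (huv : u ∣ v) {x : F} (hx : x ∈ Ffield p u) :
    x ∈ Ffield p v := by
  obtain ⟨w, rfl⟩ := huv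
  show x ^ p ^ (u * w) = x
  induction w with
  | zero => simp
  | succ w ih =>
    have h : u * (w + 1) = u * w + u := by ring
    rw [h, ← ppa, ih, hx]

private lemma Ff_add {m : ℕ} {x y : F} (hx : x ∈ Ffield p m) (hy : y ∈ Ffield p m) :
    x + y ∈ Ffield p m := by
  show (x + y) ^ p ^ m = x + y
  rw [add_pow_char_pow (x := x) (y := y) (p := p) (n := m), hx, hy]

private lemma Ff_mul {m : ℕ} {x y : F} (hx : x ∈ Ffield p m) (hy : y ∈ Ffield p m) :
    x * y ∈ Ffield p m := by
  show (x * y) ^ p ^ m = x * y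
  rw [mul_pow, hx, hy]

private lemma Ff_sub {m : ℕ} {x y : F} (hx : x ∈ Ffield p m) (hy : y ∈ Ffield p m) :
    x - y ∈ Ffield p m := by
  show (x - y) ^ p ^ m = x - y
  rw [sub_pow_char_pow (x := x) (y := y) (p := p) (n := m), hx, hy]

private lemma Ff_pow {m j : ℕ} {x : F} (hx : x ∈ Ffield p m) : x ^ j ∈ Ffield p m := by
  show (x ^ j) ^ p ^ m = x ^ j
  rw [← pow_mul, mul_comm, pow_mul, hx]

private lemma Ff_neg_one {m : ℕ} : (-1 : F) ∈ Ffield p m := by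
  show ((-1 : F)) ^ p ^ m = -1
  have h := map_neg (iterateFrobenius F p m) 1
  simpa [iterateFrobenius_def] using h

private lemma Ff_natCast {m c : ℕ} : ((c : ℕ) : F) ∈ Ffield p m := natCast_ppow m c

private lemma Ff_inv {m : ℕ} {x : F} (hx : x ∈ Ffield p m) : x⁻¹ ∈ Ffield p m := by
  show (x⁻¹) ^ p ^ m = x⁻¹
  rw [inv_pow, hx]

private lemma Ff_sum {m : ℕ} {ι : Type*} {s : Finset ι} {f : ι → F}
    (h : ∀ i ∈ s, f i ∈ Ffield p m) : (∑ i ∈ s, f i) ∈ Ffield p m := by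
  show (∑ i ∈ s, f i) ^ p ^ m = ∑ i ∈ s, f i
  rw [sum_ppow]
  exact Finset.sum_congr rfl h

private lemma Ff_gcd {x : F} : ∀ {A B : ℕ}, x ∈ Ffield p A → x ∈ Ffield p B →
    x ∈ Ffield p (Nat.gcd A B) := by
  intro A B
  induction A, B using Nat.gcd.induction with
  | H0 B => intro _ hB; simpa [Ffield] using hB
  | H1 A B hA ih =>
    intro hA' hB'
    rw [Nat.gcd_rec]
    refine ih ?_ hA'
    show x ^ p ^ (B % A) = x
    rw [← pow_pmod hA' B]
    exact hB' 

end helpers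

section B
variable {p : ℕ} [Fact p.Prime]
local notation "F" => AlgebraicClosure (ZMod p)

private lemma sum_shift {K m : ℕ} {x : F} (hxm : x ^ p ^ (K * m) = x) :
    (∑ j ∈ range m, x ^ p ^ (K * j)) ^ p ^ K = ∑ j ∈ range m, x ^ p ^ (K * j) := by
  rw [sum_ppow]
  have h1 : ∀ j : ℕ, (x ^ p ^ (K * j)) ^ p ^ K = x ^ p ^ (K * (j + 1)) := fun j => by
    rw [ppa]; ring_nf
  calc ∑ j ∈ range m, (x ^ p ^ (K * j)) ^ p ^ K
      = ∑ j ∈ range m, x ^ p ^ (K * (j + 1)) := Finset.sum_congr rfl fun j _ => h1 j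
    _ = (∑ j ∈ range (m + 1), x ^ p ^ (K * j)) - x ^ p ^ (K * 0) := by
        rw [Finset.sum_range_succ' (fun j => x ^ p ^ (K * j)) m]; ring
    _ = ∑ j ∈ range m, x ^ p ^ (K * j) := by
        rw [Finset.sum_range_succ, hxm]; simp

private lemma sum_gcd {N K : ℕ} (hN : 0 < N) {x : F} (hx : x ^ p ^ N = x) :
    ∑ j ∈ range (N / Nat.gcd N K), x ^ p ^ (K * j)
      = ∑ j ∈ range (N / Nat.gcd N K), x ^ p ^ (Nat.gcd N K * j) := by
  set g := Nat.gcd N K with hg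
  have hg0 : 0 < g := Nat.gcd_pos_of_pos_left _ hN
  set m := N / g with hm
  have hNm : N = g * m := (Nat.mul_div_cancel' (Nat.gcd_dvd_left N K)).symm
  have hm0 : 0 < m := Nat.div_pos (Nat.le_of_dvd hN (Nat.gcd_dvd_left N K)) hg0
  set c := K / g with hc
  have hKc : K = g * c := (Nat.mul_div_cancel' (Nat.gcd_dvd_right N K)).symm
  have hcop : Nat.Coprime c m := by
    have := Nat.coprime_div_gcd_div_gcd (m := N) (n := K) hg0
    exact (this).symm
  rcases eq_or_lt_of_le (Nat.succ_le_of_lt hm0) with hm1 | hm1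
  · rw [← hm1]; simp
  obtain ⟨ci, -, hci⟩ := Nat.exists_mul_mod_eq_one_of_coprime hcop hm1
  have hone : (1 : ℕ) % m = 1 := Nat.mod_eq_of_lt hm1
  have hcci : c * ci ≡ 1 [MOD m] := by
    show c * ci % m = 1 % m
    rw [hci, hone]
  have hinv : ∀ j, j < m → (ci * ((c * j) % m)) % m = j := by
    intro j hj
    have h1 : ci * ((c * j) % m) ≡ ci * (c * j) [MOD m] :=
      (Nat.mod_modEq (c * j) m).mul_left ci
    have h2 : ci * (c * j) = (c * ci) * j := by ring
    have h3 : (c * ci) * j ≡ 1 * j [MOD m] := hcci.mul_right j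
    have h4 : ci * ((c * j) % m) ≡ j [MOD m] := by
      calc ci * ((c * j) % m) ≡ ci * (c * j) [MOD m] := h1
        _ = (c * ci) * j := h2
        _ ≡ 1 * j [MOD m] := h3
        _ = j := one_mul j
    calc (ci * ((c * j) % m)) % m = j % m := h4
      _ = j := Nat.mod_eq_of_lt hj
  have hinv' : ∀ j, j < m → (c * ((ci * j) % m)) % m = j := by
    intro j hj
    have h1 : c * ((ci * j) % m) ≡ c * (ci * j) [MOD m] :=
      (Nat.mod_modEq (ci * j) m).mul_left c
    have h2 : c * (ci * j) = (c * ci) * j := by ring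
    have h3 : (c * ci) * j ≡ 1 * j [MOD m] := hcci.mul_right j
    have h4 : c * ((ci * j) % m) ≡ j [MOD m] := by
      calc c * ((ci * j) % m) ≡ c * (ci * j) [MOD m] := h1
        _ = (c * ci) * j := h2
        _ ≡ 1 * j [MOD m] := h3
        _ = j := one_mul j
    calc (c * ((ci * j) % m)) % m = j % m := h4
      _ = j := Nat.mod_eq_of_lt hj
  refine Finset.sum_nbij' (fun j => (c * j) % m) (fun j => (ci * j) % m)
    ?_ ?_ ?_ ?_ ?_
  · intro j _; exact Finset.mem_range.mpr (Nat.mod_lt _ hm0)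
  · intro j _; exact Finset.mem_range.mpr (Nat.mod_lt _ hm0)
  · intro j hj; exact hinv j (Finset.mem_range.mp hj)
  · intro j hj; exact hinv' j (Finset.mem_range.mp hj)
  · intro j _
    refine pow_pmodeq hx ?_
    have h1 : c * j ≡ (c * j) % m [MOD m] := (Nat.mod_modEq (c * j) m).symm
    have h2 : g * (c * j) ≡ g * ((c * j) % m) [MOD g * m] := h1.mul_left' g
    have h3 : K * j = g * (c * j) := by rw [hKc]; ring
    rw [h3, ← hNm] at *
    exact h2

private lemma sum_blocks {s : ℕ} (t : ℕ) (f : ℕ → F) (hper : ∀ i, f (i + s) = f i) :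
    ∑ i ∈ range (t * s), f i = t • ∑ i ∈ range s, f i := by
  have hper' : ∀ q i, f (q * s + i) = f i := by
    intro q
    induction q with
    | zero => simp
    | succ q ih =>
      intro i
      have h : (q + 1) * s + i = (q * s + i) + s := by ring
      rw [h, hper, ih]
  induction t with
  | zero => simp
  | succ t ih =>
    have h : (t + 1) * s = t * s + s := by ring
    rw [h, Finset.sum_range_add, ih, succ_nsmul]
    congr 1
    exact Finset.sum_congr rfl fun i _ => hper' t i

private lemma sum_even_odd (s : ℕ) (f : ℕ → F) :
    ∑ i ∈ range (2 * s), f i = (∑ j ∈ range s, f (2 * j)) + ∑ j ∈ range s, f (2 * j + 1) := by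
  induction s with
  | zero => simp
  | succ s ih =>
    have h : 2 * (s + 1) = (2 * s + 1) + 1 := by ring
    rw [h, Finset.sum_range_succ, Finset.sum_range_succ, ih, Finset.sum_range_succ,
      Finset.sum_range_succ]
    ring

end B

section C
variable {p : ℕ} [Fact p.Prime]
local notation "F" => AlgebraicClosure (ZMod p)

/-- Tmap of x lands in Ffield p u -/
private lemma tmap_mem {u v : ℕ} (huv : u ∣ v) {x : F} (hx : x ∈ Ffield p v) :
    Tmap p u v x ∈ Ffield p u := by
  show (∑ i ∈ range (v / u), x ^ p ^ (u * i)) ^ p ^ u = _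
  refine sum_shift ?_
  have h : u * (v / u) = v := Nat.mul_div_cancel' huv
  rw [h]
  exact hx

private lemma tmap_add (u v : ℕ) (x y : F) :
    Tmap p u v (x + y) = Tmap p u v x + Tmap p u v y := by
  unfold Tmap
  rw [← Finset.sum_add_distrib]
  refine Finset.sum_congr rfl fun i _ => ?_
  rw [add_pow_char_pow (x := x) (y := y) (p := p) (n := u * i)]

private lemma tmap_ppow (u v s : ℕ) (x : F) :
    Tmap p u v (x ^ p ^ s) = (Tmap p u v x) ^ p ^ s := by
  unfold Tmap
  rw [sum_ppow]
  refine Finset.sum_congr rfl fun i _ => ?_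
  rw [ppa, ppa, add_comm]

private lemma smap_add (l k : ℕ) (x y : F) :
    Smap p l k (x + y) = Smap p l k x + Smap p l k y := by
  unfold Smap
  rw [← Finset.sum_add_distrib]
  refine Finset.sum_congr rfl fun i _ => ?_
  rw [add_pow_char_pow (x := x) (y := y) (p := p) (n := l * i), mul_add]

private lemma smap_mul_const {l k : ℕ} {u : F} (hu : ∀ t : ℕ, u ^ p ^ t = u) (z : F) :
    Smap p l k (u * z) = u * Smap p l k z := by
  unfold Smap
  rw [Finset.mul_sum]
  refine Finset.sum_congr rfl fun i _ => ?_
  rw [mul_pow, hu]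
  ring

private lemma smap_mem (hp2 : p ≠ 2) {l k m : ℕ} {x : F} (hx : x ∈ Ffield p m) :
    Smap p l k x ∈ Ffield p m := by
  refine Ff_sum fun i _ => Ff_mul ?_ (Ff_ppow _ hx)
  exact Ff_pow Ff_neg_one

/-- key identity : S + S^{p^l} = x - x^{p^k} -/
private lemma smap_key (hp2 : p ≠ 2) {l k : ℕ} (hlk : l ∣ k) (hkl : Even (k / l)) (x : F) :
    Smap p l k x + (Smap p l k x) ^ p ^ l = x - x ^ p ^ k := by
  set m := k / l with hm
  have hk : l * m = k := Nat.mul_div_cancel' hlk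
  set f : ℕ → F := fun i => (-1 : F) ^ i * x ^ p ^ (l * i) with hf
  have hS : Smap p l k x = ∑ i ∈ range m, f i := rfl
  have hfrob : (Smap p l k x) ^ p ^ l = -∑ i ∈ range m, f (i + 1) := by
    rw [hS, sum_ppow, ← Finset.sum_neg_distrib]
    refine Finset.sum_congr rfl fun i _ => ?_
    rw [hf]
    simp only []
    rw [mul_pow, ppa, ← pow_mul (-1 : F), mul_comm i (p ^ l), pow_mul (-1 : F),
      neg_one_ppow hp2]
    have h1 : l * i + l = l * (i + 1) := by ring
    rw [h1]
    ring
  rw [hfrob, hS]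
  have h2 : (∑ i ∈ range m, f i) + -∑ i ∈ range m, f (i + 1)
      = ∑ i ∈ range m, (f i - f (i + 1)) := by
    rw [Finset.sum_sub_distrib]
    ring
  rw [h2, Finset.sum_range_sub' f m, hf]
  simp only []
  rw [hk, Even.neg_one_pow hkl]
  simp

/-- explicit Hilbert 90 solution -/
private lemma h90 {K m : ℕ} {dl b : F}
    (hdm : dl ^ p ^ (K * m) = dl) (hbm : b ^ p ^ (K * m) = b)
    (hd1 : ∑ j ∈ range m, dl ^ p ^ (K * j) = 1)
    (hb0 : ∑ j ∈ range m, b ^ p ^ (K * j) = 0) :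
    (∑ i ∈ range (m - 1), ∑ j ∈ Finset.Ico (i + 1) m, dl ^ p ^ (K * j) * b ^ p ^ (K * i))
      - (∑ i ∈ range (m - 1), ∑ j ∈ Finset.Ico (i + 1) m,
          dl ^ p ^ (K * j) * b ^ p ^ (K * i)) ^ p ^ K = b := by
  set D : ℕ → F := fun j => dl ^ p ^ (K * j) with hD
  set Bf : ℕ → F := fun i => b ^ p ^ (K * i) with hBf
  set Bs : ℕ → F := fun j => ∑ i ∈ range j, Bf i with hBs
  have hy : (∑ i ∈ range (m - 1), ∑ j ∈ Finset.Ico (i + 1) m, D j * Bf i)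
      = ∑ j ∈ range m, D j * Bs j := by
    rw [Finset.sum_comm' (s' := fun j => range j) (t' := range m)
      (fun i j => by simp only [Finset.mem_range, Finset.mem_Ico]; omega)]
    exact Finset.sum_congr rfl fun j _ => (Finset.mul_sum _ _ _).symm
  rw [hy]
  have hD1 : ∀ j : ℕ, (D j) ^ p ^ K = D (j + 1) := fun j => by
    rw [hD]; simp only []
    rw [ppa, show K * j + K = K * (j + 1) from by ring]
  have hB1 : ∀ i : ℕ, (Bf i) ^ p ^ K = Bf (i + 1) := fun i => by
    rw [hBf]; simp only []
    rw [ppa, show K * i + K = K * (i + 1) from by ring]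
  have hDm : D m = D 0 := by
    rw [hD]; simp only []
    rw [hdm, Nat.mul_zero, pow_zero, pow_one]
  have hBm : Bs m = 0 := hb0
  have hBs0 : Bs 0 = 0 := by rw [hBs]; simp
  have hstep : (∑ j ∈ range m, D j * Bs j) ^ p ^ K
      = ∑ j ∈ range m, D (j + 1) * (Bs (j + 1) - Bf 0) := by
    rw [sum_ppow]
    refine Finset.sum_congr rfl fun j _ => ?_
    rw [mul_pow, hD1]
    congr 1
    rw [hBs]
    simp only []
    rw [sum_ppow]
    have h3 : ∑ i ∈ range j, (Bf i) ^ p ^ K = ∑ i ∈ range j, Bf (i + 1) :=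
      Finset.sum_congr rfl fun i _ => hB1 i
    rw [h3]
    have h4 := Finset.sum_range_succ' Bf j
    -- h4 : ∑ i ∈ range (j+1), Bf i = (∑ i ∈ range j, Bf (i+1)) + Bf 0
    rw [eq_sub_iff_add_eq]
    exact h4.symm
  rw [hstep]
  have hsplit : ∑ j ∈ range m, D (j + 1) * (Bs (j + 1) - Bf 0)
      = (∑ j ∈ range m, D (j + 1) * Bs (j + 1)) - (∑ j ∈ range m, D (j + 1)) * Bf 0 := by
    have hterm : ∀ j : ℕ, D (j + 1) * (Bs (j + 1) - Bf 0)
        = D (j + 1) * Bs (j + 1) - D (j + 1) * Bf 0 := fun j => by ring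
    simp_rw [hterm]
    rw [Finset.sum_sub_distrib, Finset.sum_mul]
  rw [hsplit]
  have h5 : ∑ j ∈ range m, D (j + 1) * Bs (j + 1) = ∑ j ∈ range m, D j * Bs j := by
    have h6 := Finset.sum_range_succ' (fun j => D j * Bs j) m
    have h7 := Finset.sum_range_succ (fun j => D j * Bs j) m
    -- h6 : ∑_{range (m+1)} = ∑_{j<m} D(j+1) Bs(j+1) + D 0 * Bs 0
    -- h7 : ∑_{range (m+1)} = ∑_{j<m} D j Bs j + D m * Bs m
    have := h6.symm.trans h7
    rw [hBs0, hBm] at this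
    simpa using this
  have h8 : ∑ j ∈ range m, D (j + 1) = 1 := by
    have h6 := Finset.sum_range_succ' D m
    have h7 := Finset.sum_range_succ D m
    have h9 := h6.symm.trans h7
    rw [hDm, hd1] at h9
    -- h9 : ∑ j ∈ range m, D (j+1) + D 0 = 1 + D 0
    have h10 : ∑ j ∈ range m, D (j + 1) + D 0 = 1 + D 0 := h9
    exact add_right_cancel h10
  rw [h5, h8]
  have hBf0 : Bf 0 = b := by rw [hBf]; simp
  rw [hBf0]
  ring

end C

section D
variable {p : ℕ} [Fact p.Prime]
local notation "F" => AlgebraicClosure (ZMod p)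
open Polynomial

private lemma exists_tmap_one {u v : ℕ} (hu : 0 < u) (hv : 0 < v) (huv : u ∣ v) :
    ∃ z ∈ Ffield p v, Tmap p u v z = 1 := by
  classical
  have hp1' : 1 < p := (Fact.out : p.Prime).one_lt
  have hvu : 0 < v / u := Nat.div_pos (Nat.le_of_dvd hv huv) hu
  by_cases hall : ∀ z ∈ Ffield p v, Tmap p u v z = 0
  · exfalso
    set g : Polynomial F := X ^ p ^ v - X with hgdef
    set f : Polynomial F := ∑ i ∈ range (v / u), X ^ p ^ (u * i) with hfdef
    have hpv1 : 1 < p ^ v := Nat.one_lt_pow hv.ne' hp1'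
    have hgmonic : g.Monic := by
      refine monic_X_pow_sub ?_
      calc degree (X : Polynomial F) = 1 := degree_X
        _ < (p ^ v : ℕ) := by exact_mod_cast Nat.one_lt_cast.mpr hpv1
    have hg0 : g ≠ 0 := hgmonic.ne_zero
    have hgdeg : g.natDegree = p ^ v := by
      rw [hgdef]
      rw [natDegree_sub_eq_left_of_natDegree_lt]
      · exact natDegree_X_pow _
      · rw [natDegree_X_pow, natDegree_X]
        exact hpv1
    have hgsep : g.Separable := by
      rw [separable_def, hgdef]
      have hder : derivative (X ^ p ^ v - X : Polynomial F) = -1 := by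
        rw [derivative_sub, derivative_X_pow, derivative_X]
        have hcast : ((p ^ v : ℕ) : F) = 0 := by
          rw [Nat.cast_pow]
          rw [CharP.cast_eq_zero F p]
          exact zero_pow hv.ne'
        rw [hcast]
        simp
      rw [hder]
      exact (isCoprime_one_right).neg_right
    have hgroots : Multiset.card g.roots = p ^ v := by
      have hsplit : g.Splits := IsAlgClosed.splits g
      rw [splits_iff_card_roots.mp hsplit, hgdeg]
    have hroot_mem : ∀ z : F, z ∈ g.roots → z ∈ Ffield p v := by
      intro z hz
      have heval : g.eval z = 0 := (mem_roots hg0).mp hz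
      rw [hgdef] at heval
      simp only [eval_sub, eval_pow, eval_X] at heval
      exact sub_eq_zero.mp heval
    have hf0 : f ≠ 0 := by
      intro hf
      have hcoeff : f.coeff 1 = 1 := by
        rw [hfdef, finset_sum_coeff]
        have hterm : ∀ i : ℕ, ((X : Polynomial F) ^ p ^ (u * i)).coeff 1
            = if i = 0 then 1 else 0 := by
          intro i
          rw [coeff_X_pow]
          rcases Nat.eq_zero_or_pos i with h | h
          · simp [h]
          · have h1 : 1 < p ^ (u * i) := Nat.one_lt_pow (by positivity) hp1'
            have h2 : (1 : ℕ) ≠ p ^ (u * i) := by omega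
            simp [h2, h.ne']
        rw [Finset.sum_congr rfl fun i _ => hterm i]
        rw [Finset.sum_ite_eq' (range (v / u)) 0 (fun _ => (1 : F))]
        simp [Finset.mem_range, hvu]
      rw [hf] at hcoeff
      simp at hcoeff
    have hfdeg : f.natDegree ≤ p ^ (v - 1) := by
      refine natDegree_sum_le_of_forall_le _ _ fun i hi => ?_
      rw [natDegree_X_pow]
      refine Nat.pow_le_pow_right (le_of_lt hp1') ?_
      have hi' := Finset.mem_range.mp hi
      have h2 : u * (v / u) = v := Nat.mul_div_cancel' huv
      obtain ⟨w', hw'⟩ : ∃ w', v / u = w' + 1 := ⟨v / u - 1, by omega⟩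
      have hle : i ≤ w' := by omega
      have h3 : u * i ≤ u * w' := Nat.mul_le_mul_left u hle
      have h4 : u * w' + u = v := by rw [← h2, hw']; ring
      omega
    have hsubset : g.roots.toFinset ⊆ f.roots.toFinset := by
      intro z hz
      rw [Multiset.mem_toFinset] at hz ⊢
      have hzF : z ∈ Ffield p v := hroot_mem z hz
      have hzero := hall z hzF
      rw [mem_roots hf0]
      show f.eval z = 0
      rw [hfdef, eval_finset_sum]
      simp only [eval_pow, eval_X]
      exact hzero
    have hcard1 : g.roots.toFinset.card = p ^ v := by
      rw [Multiset.toFinset_card_of_nodup (nodup_roots hgsep), hgroots]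
    have hcard2 : f.roots.toFinset.card ≤ p ^ (v - 1) :=
      le_trans (Multiset.toFinset_card_le _) (le_trans (card_roots' f) hfdeg)
    have hlt : p ^ (v - 1) < p ^ v := Nat.pow_lt_pow_right hp1' (by omega)
    have := Finset.card_le_card hsubset
    omega
  · push_neg at hall
    obtain ⟨z, hz, hz0⟩ := hall
    set c := Tmap p u v z with hcdef
    have hcu : c ∈ Ffield p u := tmap_mem huv hz
    have hcinv : c⁻¹ ∈ Ffield p u := Ff_inv hcu
    have hfix : ∀ i : ℕ, (c⁻¹) ^ p ^ (u * i) = c⁻¹ := by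
      intro i
      have h := pow_pmodeq (x := c⁻¹) hcinv (s := u * i) (t := 0)
        (by show u * i % u = 0 % u; simp [Nat.mul_mod_right])
      simpa using h
    refine ⟨c⁻¹ * z, Ff_mul (Ff_mono huv hcinv) hz, ?_⟩
    unfold Tmap
    have hterm : ∀ i ∈ range (v / u), (c⁻¹ * z) ^ p ^ (u * i)
        = c⁻¹ * z ^ p ^ (u * i) := by
      intro i _
      rw [mul_pow, hfix]
    rw [Finset.sum_congr rfl hterm, ← Finset.mul_sum]
    have : ∑ i ∈ range (v / u), z ^ p ^ (u * i) = c := rfl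
    rw [this]
    exact inv_mul_cancel₀ hz0

end D


theorem stmt16 (p : ℕ) [Fact p.Prime] (hp2 : p ≠ 2) (n k l : ℕ)
    (hn : 0 < n) (hk : 0 < k) (hl : 0 < l)
    (hlk : l ∣ k) (hkl : Even (k / l)) (d e L : ℕ)
    (hd : d = Nat.gcd n k) (he : e = Nat.gcd n l) (hL : L = Nat.lcm d l)
    (hde : Even (d / e)) (hpk : ¬ p ∣ k / L)
    (a : AlgebraicClosure (ZMod p)) (ha : a ∈ Ffield p n) :
    ((∃ x ∈ Ffield p n, Smap p l k x = a) ↔ Tmap p e (2 * e) (Tmap p d n a) = 0) ∧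
    (Tmap p e (2 * e) (Tmap p d n a) = 0 →
      ∀ δ ∈ Ffield p n, Tmap p d n δ = 1 →
      ∀ δ₁ ∈ Ffield p d, Tmap p (2 * e) d δ₁ = 1 →
      ∀ y₀, y₀ = ∑ i ∈ Finset.range (n / d - 1), ∑ j ∈ Finset.Ico (i + 1) (n / d),
          δ ^ p ^ (k * j) * (Tmap p l (2 * l) a) ^ p ^ (k * i) →
      ∀ x₀, x₀ = y₀ + (((2 * (k / L) : ℕ) : AlgebraicClosure (ZMod p)))⁻¹ *
          (a - Smap p l k y₀) * δ₁ →
        x₀ ∈ Ffield p n ∧ Smap p l k x₀ = a) := by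
  have hp1' : 1 < p := (Fact.out : p.Prime).one_lt
  -- divisibility bookkeeping
  have hdn : d ∣ n := hd ▸ Nat.gcd_dvd_left n k
  have hdk : d ∣ k := hd ▸ Nat.gcd_dvd_right n k
  have hen : e ∣ n := he ▸ Nat.gcd_dvd_left n l
  have hel : e ∣ l := he ▸ Nat.gcd_dvd_right n l
  have he0 : 0 < e := he ▸ Nat.gcd_pos_of_pos_left _ hn
  have hd0 : 0 < d := hd ▸ Nat.gcd_pos_of_pos_left _ hn
  have hed : e ∣ d := hd ▸ Nat.dvd_gcd hen (hel.trans hlk)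
  have h2ed : 2 * e ∣ d := by
    obtain ⟨w, hw⟩ := hed
    obtain ⟨t2, ht2⟩ := hde
    have hwd : d / e = w := by rw [hw]; exact Nat.mul_div_cancel_left w he0
    have hw2 : w = 2 * t2 := by omega
    exact ⟨t2, by rw [hw, hw2]; ring⟩
  have hdl_gcd : Nat.gcd d l = e := by
    have h1 : Nat.gcd d l ∣ e :=
      he ▸ Nat.dvd_gcd ((Nat.gcd_dvd_left d l).trans hdn) (Nat.gcd_dvd_right d l)
    have h2 : e ∣ Nat.gcd d l := Nat.dvd_gcd hed hel
    exact Nat.dvd_antisymm h1 h2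
  have hLd : d ∣ L := hL ▸ Nat.dvd_lcm_left d l
  have hLk : L ∣ k := hL ▸ Nat.lcm_dvd hdk hlk
  have hL0 : 0 < L := Nat.pos_of_dvd_of_pos hLk hk
  have hLdl : l * (d / e) = L := by
    have hglcm : Nat.gcd d l * Nat.lcm d l = d * l := Nat.gcd_mul_lcm d l
    rw [hdl_gcd, ← hL] at hglcm
    obtain ⟨w, hw⟩ := hed
    rw [hw, Nat.mul_div_cancel_left w he0]
    have h6 : e * (l * w) = e * L := by rw [hglcm, hw]; ring
    exact Nat.eq_of_mul_eq_mul_left he0 h6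
  have hkl_split : k / l = (k / L) * (d / e) := by
    obtain ⟨t, ht⟩ := hLk
    have hkLt : k / L = t := by rw [ht]; exact Nat.mul_div_cancel_left t hL0
    have hklt : k = l * ((d / e) * t) := by rw [ht, ← hLdl]; ring
    rw [hkLt, hklt, Nat.mul_div_cancel_left _ hl]
    ring
  have hne2 : 2 ∣ n / e := by
    obtain ⟨w, hw⟩ := h2ed.trans hdn
    refine ⟨w, ?_⟩
    rw [hw, show 2 * e * w = e * (2 * w) from by ring, Nat.mul_div_cancel_left _ he0]
  have hlodd : Odd (l / e) := by
    have hcop : Nat.Coprime (n / e) (l / e) := by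
      have hc := Nat.coprime_div_gcd_div_gcd (m := n) (n := l) (he ▸ he0)
      rwa [← he] at hc
    rcases Nat.even_or_odd (l / e) with hev | hod
    · exfalso
      obtain ⟨w, hw⟩ := hev
      have h2 : (2 : ℕ) ∣ Nat.gcd (n / e) (l / e) := Nat.dvd_gcd hne2 ⟨w, by omega⟩
      rw [Nat.Coprime] at hcop
      rw [hcop] at h2
      omega
    · exact hod
  have hlmod : l % (2 * e) = e := by
    obtain ⟨lq, hlq⟩ := hlodd
    have hle : e * (l / e) = l := Nat.mul_div_cancel' hel
    have hlform : l = e + 2 * e * lq := by rw [← hle, hlq]; ring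
    rw [hlform, Nat.add_mul_mod_self_left]
    exact Nat.mod_eq_of_lt (by omega)
  have hm0 : 0 < n / d := Nat.div_pos (Nat.le_of_dvd hn hdn) hd0
  have h2e2 : 2 * e / e = 2 := by
    rw [mul_comm 2 e]; exact Nat.mul_div_cancel_left 2 he0
  have h2l2 : 2 * l / l = 2 := by
    rw [mul_comm 2 l]; exact Nat.mul_div_cancel_left 2 hl
  -- abbreviations
  set b := Tmap p l (2 * l) a with hbdef
  set c := Tmap p d n a with hcdef
  have hbeq : b = a + a ^ p ^ l := by
    rw [hbdef]
    unfold Tmap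
    rw [h2l2, Finset.sum_range_succ, Finset.sum_range_succ, Finset.sum_range_zero]
    simp
  have hcF : c ∈ Ffield p d := tmap_mem hdn ha
  have hbF : b ∈ Ffield p n := by rw [hbeq]; exact Ff_add ha (Ff_ppow l ha)
  have hTb : Tmap p d n b = c + c ^ p ^ l := by
    rw [hbeq, tmap_add, tmap_ppow, ← hcdef]
  have hTe : Tmap p e (2 * e) c = c + c ^ p ^ e := by
    unfold Tmap
    rw [h2e2, Finset.sum_range_succ, Finset.sum_range_succ, Finset.sum_range_zero]
    simp
  -- the condition is equivalent to c^{p^l} = -c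
  have hcond_iff : (Tmap p e (2 * e) c = 0) ↔ c ^ p ^ l = -c := by
    constructor
    · intro h0
      rw [hTe] at h0
      have hce : c ^ p ^ e = -c := by
        rw [add_comm] at h0; exact eq_neg_of_add_eq_zero_left h0
      have hind : ∀ j : ℕ, c ^ p ^ (e * j) = (-1 : AlgebraicClosure (ZMod p)) ^ j * c := by
        intro j
        induction j with
        | zero => simp
        | succ j ih =>
          rw [show e * (j + 1) = e * j + e from by ring, ← ppa, ih, mul_pow,
            ← pow_mul (-1 : AlgebraicClosure (ZMod p)), mul_comm j (p ^ e), pow_mul (-1 : AlgebraicClosure (ZMod p)),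
            neg_one_ppow hp2, hce]
          ring
      have h3 := hind (l / e)
      rw [Nat.mul_div_cancel' hel, Odd.neg_one_pow hlodd] at h3
      rw [h3]; ring
    · intro hcl
      have h4 : c ^ p ^ (2 * l) = c := by
        calc c ^ p ^ (2 * l) = (c ^ p ^ l) ^ p ^ l := by
              rw [ppa, show l + l = 2 * l from by ring]
          _ = (-c) ^ p ^ l := by rw [hcl]
          _ = c := by
              rw [neg_eq_neg_one_mul, mul_pow, neg_one_ppow hp2, hcl]
              ring
      have hgd2l : Nat.gcd d (2 * l) = 2 * e := by
        have h1 : 2 * e ∣ Nat.gcd d (2 * l) := Nat.dvd_gcd h2ed (mul_dvd_mul_left 2 hel)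
        have h3 : Nat.gcd d (2 * l) ∣ Nat.gcd (2 * d) (2 * l) :=
          Nat.dvd_gcd ((Nat.gcd_dvd_left _ _).trans (dvd_mul_left d 2)) (Nat.gcd_dvd_right _ _)
        rw [Nat.gcd_mul_left, hdl_gcd] at h3
        exact Nat.dvd_antisymm h3 h1
      have h6 := Ff_gcd (A := d) (B := 2 * l) hcF h4
      rw [hgd2l] at h6
      have h7 := pow_pmod (x := c) h6 l
      rw [hlmod] at h7
      rw [hTe, ← h7, hcl]
      ring
  -- periodicity modulo n for exponent k * (n/d)
  have hkm : ∀ x : AlgebraicClosure (ZMod p), x ∈ Ffield p n → x ^ p ^ (k * (n / d)) = x := by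
    intro x hx
    obtain ⟨kd, hkd⟩ := hdk
    have h2 : k * (n / d) = kd * n := by
      calc k * (n / d) = kd * (d * (n / d)) := by rw [hkd]; ring
        _ = kd * n := by rw [Nat.mul_div_cancel' hdn]
    have h1 : k * (n / d) ≡ 0 [MOD n] := by
      show k * (n / d) % n = 0 % n
      rw [h2]
      simp [Nat.mul_mod_left]
    have := pow_pmodeq hx h1
    simpa using this
  -- forward direction
  have forward : ∀ x ∈ Ffield p n, Smap p l k x = a → Tmap p e (2 * e) c = 0 := by
    intro x hx hsx
    have hkey := smap_key hp2 hlk hkl x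
    rw [hsx] at hkey
    have hbx : b = x - x ^ p ^ k := hbeq.trans hkey
    have hTb0 : Tmap p d n b = 0 := by
      unfold Tmap
      have hsg := sum_gcd (N := n) (K := k) hn hbF
      rw [← hd] at hsg
      rw [← hsg]
      have hterm : ∀ j : ℕ, b ^ p ^ (k * j) = x ^ p ^ (k * j) - x ^ p ^ (k * (j + 1)) := by
        intro j
        rw [hbx, sub_pow_char_pow (x := x) (y := x ^ p ^ k) (p := p) (n := k * j),
          ppa, show k + k * j = k * (j + 1) from by ring]
      rw [Finset.sum_congr rfl fun j _ => hterm j,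
        Finset.sum_range_sub' (fun j => x ^ p ^ (k * j))]
      rw [hkm x hx]
      simp
    rw [hTb] at hTb0
    rw [add_comm] at hTb0
    exact hcond_iff.mpr (eq_neg_of_add_eq_zero_left hTb0)
  -- main construction
  have part2 : Tmap p e (2 * e) c = 0 →
      ∀ δ ∈ Ffield p n, Tmap p d n δ = 1 →
      ∀ δ₁ ∈ Ffield p d, Tmap p (2 * e) d δ₁ = 1 →
      ∀ y₀, y₀ = ∑ i ∈ Finset.range (n / d - 1), ∑ j ∈ Finset.Ico (i + 1) (n / d),
          δ ^ p ^ (k * j) * b ^ p ^ (k * i) →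
      ∀ x₀, x₀ = y₀ + (((2 * (k / L) : ℕ) : AlgebraicClosure (ZMod p)))⁻¹ * (a - Smap p l k y₀) * δ₁ →
        x₀ ∈ Ffield p n ∧ Smap p l k x₀ = a := by
    intro hcond δ hδF hδ1 δ₁ hδ₁F hδ₁1 y₀ hy₀ x₀ hx₀
    have hcl : c ^ p ^ l = -c := hcond_iff.mp hcond
    have hTb0 : Tmap p d n b = 0 := by rw [hTb, hcl]; ring
    have hsum_b : ∑ j ∈ range (n / d), b ^ p ^ (k * j) = 0 := by
      have hsg := sum_gcd (N := n) (K := k) hn hbF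
      rw [← hd] at hsg
      rw [hsg]
      exact hTb0
    have hsum_δ : ∑ j ∈ range (n / d), δ ^ p ^ (k * j) = 1 := by
      have hsg := sum_gcd (N := n) (K := k) hn hδF
      rw [← hd] at hsg
      rw [hsg]
      exact hδ1
    have h90' := h90 (K := k) (m := n / d) (hkm δ hδF) (hkm b hbF) hsum_δ hsum_b
    rw [← hy₀] at h90'
    have hy₀F : y₀ ∈ Ffield p n := by
      rw [hy₀]
      exact Ff_sum fun i _ => Ff_sum fun j _ => Ff_mul (Ff_ppow _ hδF) (Ff_ppow _ hbF)
    have hSy := smap_key hp2 hlk hkl y₀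
    rw [h90'] at hSy
    set r := a - Smap p l k y₀ with hrdef
    have hrF : r ∈ Ffield p n := Ff_sub ha (smap_mem hp2 hy₀F)
    have hr0 : r + r ^ p ^ l = 0 := by
      calc r + r ^ p ^ l
          = (a + a ^ p ^ l) - (Smap p l k y₀ + (Smap p l k y₀) ^ p ^ l) := by
            rw [hrdef, sub_pow_char_pow (x := a) (y := Smap p l k y₀) (p := p) (n := l)]
            ring
        _ = b - b := by rw [hSy, ← hbeq]
        _ = 0 := sub_self b
    have hrl : r ^ p ^ l = -r := by
      rw [add_comm] at hr0; exact eq_neg_of_add_eq_zero_left hr0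
    have hrpow : ∀ i : ℕ, r ^ p ^ (l * i) = (-1 : AlgebraicClosure (ZMod p)) ^ i * r := by
      intro i
      induction i with
      | zero => simp
      | succ i ih =>
        rw [show l * (i + 1) = l * i + l from by ring, ← ppa, ih, mul_pow,
          ← pow_mul (-1 : AlgebraicClosure (ZMod p)), mul_comm i (p ^ l), pow_mul (-1 : AlgebraicClosure (ZMod p)),
          neg_one_ppow hp2, hrl]
        ring
    have hδ₁n : δ₁ ∈ Ffield p n := Ff_mono hdn hδ₁F
    -- the δ₁ sum
    obtain ⟨t2, ht2⟩ := hde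
    have hs2 : d / e = 2 * t2 := by omega
    have hd2 : d = 2 * e * t2 := by
      rw [← Nat.mul_div_cancel' hed, hs2]; ring
    have hs2' : d / (2 * e) = t2 := by
      rw [hd2]; exact Nat.mul_div_cancel_left t2 (by omega)
    have hev0 : ∑ j ∈ range t2, δ₁ ^ p ^ (2 * e * j) = 1 := by
      have h := hδ₁1
      unfold Tmap at h
      rwa [hs2'] at h
    have hinner : ∑ i ∈ range (d / e), δ₁ ^ p ^ (l * i) = 2 := by
      have hsg := sum_gcd (N := d) (K := l) hd0 hδ₁F
      rw [hdl_gcd] at hsg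
      rw [hsg, hs2, sum_even_odd t2 (fun i => δ₁ ^ p ^ (e * i))]
      have hev : ∑ j ∈ range t2, δ₁ ^ p ^ (e * (2 * j)) = 1 := by
        have heq : ∀ j : ℕ, e * (2 * j) = 2 * e * j := fun j => by ring
        simp_rw [heq]
        exact hev0
      have hodd : ∑ j ∈ range t2, δ₁ ^ p ^ (e * (2 * j + 1)) = 1 := by
        have hterm : ∀ j : ℕ, δ₁ ^ p ^ (e * (2 * j + 1)) = (δ₁ ^ p ^ (2 * e * j)) ^ p ^ e :=
          fun j => by rw [show e * (2 * j + 1) = 2 * e * j + e from by ring, ← ppa]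
        simp_rw [hterm]
        rw [← sum_ppow, hev0, one_pow]
      rw [hev, hodd]
      norm_num
    have hper : ∀ i : ℕ, δ₁ ^ p ^ (l * (i + d / e)) = δ₁ ^ p ^ (l * i) := by
      intro i
      refine pow_pmodeq hδ₁F ?_
      show l * (i + d / e) % d = l * i % d
      have hL' : l * (i + d / e) = l * i + L := by rw [← hLdl]; ring
      obtain ⟨Lq, hLq⟩ := hLd
      rw [hL', hLq, show l * i + d * Lq = l * i + Lq * d from by ring,
        Nat.add_mul_mod_self_right]
    have hδ₁sum : ∑ i ∈ range (k / l), δ₁ ^ p ^ (l * i) = ((2 * (k / L) : ℕ) : AlgebraicClosure (ZMod p)) := by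
      rw [hkl_split, sum_blocks (s := d / e) (k / L) (fun i => δ₁ ^ p ^ (l * i)) hper,
        hinner, nsmul_eq_mul]
      push_cast
      ring
    have hcast0 : ((2 * (k / L) : ℕ) : AlgebraicClosure (ZMod p)) ≠ 0 := by
      rw [Ne, CharP.cast_eq_zero_iff (AlgebraicClosure (ZMod p)) p]
      intro hdvd
      rcases (Nat.Prime.dvd_mul (Fact.out : p.Prime)).mp hdvd with h | h
      · exact hp2 ((Nat.prime_dvd_prime_iff_eq (Fact.out : p.Prime) Nat.prime_two).mp h)
      · exact hpk h
    set uu := (((2 * (k / L) : ℕ) : AlgebraicClosure (ZMod p)))⁻¹ with huu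
    have huufix : ∀ t : ℕ, uu ^ p ^ t = uu := by
      intro t
      rw [huu, inv_pow, natCast_ppow]
    have hx₀' : x₀ = y₀ + uu * (r * δ₁) := by rw [hx₀]; ring
    have hSrδ : Smap p l k (r * δ₁) = r * ((2 * (k / L) : ℕ) : AlgebraicClosure (ZMod p)) := by
      unfold Smap
      have hterm : ∀ i ∈ range (k / l), (-1 : AlgebraicClosure (ZMod p)) ^ i * (r * δ₁) ^ p ^ (l * i)
          = r * δ₁ ^ p ^ (l * i) := by
        intro i _
        have hsq : (-1 : AlgebraicClosure (ZMod p)) ^ i * (-1 : AlgebraicClosure (ZMod p)) ^ i = 1 := by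
          rw [← mul_pow]
          norm_num
        calc (-1 : AlgebraicClosure (ZMod p)) ^ i * (r * δ₁) ^ p ^ (l * i)
            = (-1 : AlgebraicClosure (ZMod p)) ^ i * ((-1 : AlgebraicClosure (ZMod p)) ^ i * r * δ₁ ^ p ^ (l * i)) := by
              rw [mul_pow, hrpow]
          _ = ((-1 : AlgebraicClosure (ZMod p)) ^ i * (-1 : AlgebraicClosure (ZMod p)) ^ i) * (r * δ₁ ^ p ^ (l * i)) := by ring
          _ = r * δ₁ ^ p ^ (l * i) := by rw [hsq, one_mul]
      rw [Finset.sum_congr rfl hterm, ← Finset.mul_sum, hδ₁sum]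
    have hSx₀ : Smap p l k x₀ = a := by
      rw [hx₀', smap_add, smap_mul_const huufix, hSrδ, huu]
      have hcancel : (((2 * (k / L) : ℕ) : AlgebraicClosure (ZMod p)))⁻¹ * (r * ((2 * (k / L) : ℕ) : AlgebraicClosure (ZMod p))) = r := by
        rw [mul_comm r, ← mul_assoc, inv_mul_cancel₀ hcast0, one_mul]
      rw [hcancel, hrdef]
      ring
    refine ⟨?_, hSx₀⟩
    rw [hx₀']
    exact Ff_add hy₀F (Ff_mul (huufix n) (Ff_mul hrF hδ₁n))
  refine ⟨⟨?_, ?_⟩, part2⟩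
  · rintro ⟨x, hx, hsx⟩
    exact forward x hx hsx
  · intro hcond
    obtain ⟨δ, hδF, hδ1⟩ := exists_tmap_one (p := p) hd0 hn hdn
    obtain ⟨δ₁, hδ₁F, hδ₁1⟩ := exists_tmap_one (p := p) (by omega : 0 < 2 * e) hd0 h2ed
    obtain ⟨hx₀F, hx₀S⟩ := part2 hcond δ hδF hδ1 δ₁ hδ₁F hδ₁1 _ rfl _ rfl
    exact ⟨_, hx₀F, hx₀S⟩
end

section
/- Let p be an odd prime, let n, k, l be positive integers with l | k and k/l odd, and set d = gcd(n,k), L = lcm(d,l). Suppose n/d is even and p divides k/L. Let a ∈ 𝔽_{p^n}. Then the equation S_l^k(X) = a has a solution in 𝔽_{p^n} if and only if S_d^n(a) = 0. Moreover, in that case, for any δ ∈ 𝔽_{p^n} with T_d^n(δ) = 1, the element x₀ = T_l^{2l}( Σ_{i=0}^{n/d−2} Σ_{j=i+1}^{n/d−1} (−1)^i δ^{p^{kj}} a^{p^{ki}} ) lies in 𝔽_{p^n} and satisfies S_l^k(x₀) = a. -/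
open Finset

namespace Stmt17Aux

variable {F : Type*} [Field F]

lemma pow_pow_mod (p n : ℕ) (z : F) (hz : z ^ p ^ n = z) (s : ℕ) :
    z ^ p ^ s = z ^ p ^ (s % n) := by
  conv_lhs => rw [← Nat.div_add_mod s n]
  generalize s / n = q
  induction q with
  | zero => simp
  | succ t ih =>
      have h1 : n * (t+1) + s % n = n + (n * t + s % n) := by ring
      rw [h1, pow_add, pow_mul, hz, ih]

lemma pow_pow_congr (p n : ℕ) (z : F) (hz : z ^ p ^ n = z) {s t : ℕ}
    (h : s ≡ t [MOD n]) : z ^ p ^ s = z ^ p ^ t := by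
  rw [pow_pow_mod p n z hz s, pow_pow_mod p n z hz t, h]

lemma eps_pow_congr (ε : F) (hε : ε ^ 2 = 1) {i j : ℕ} (h : i ≡ j [MOD 2]) :
    ε ^ i = ε ^ j := by
  have key : ∀ s : ℕ, ε ^ s = ε ^ (s % 2) := by
    intro s
    conv_lhs => rw [← Nat.div_add_mod s 2, pow_add, pow_mul, hε, one_pow, one_mul]
  rw [key i, key j, h]

lemma sum_sub_sum_shift {R : Type*} [CommRing R] (g : ℕ → R) (M : ℕ) :
    (∑ i ∈ range M, g i) - ∑ i ∈ range M, g (i+1) = g 0 - g M := by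
  have h1 := Finset.sum_range_succ g M
  have h2 := Finset.sum_range_succ' g M
  rw [h1] at h2
  linear_combination h2

lemma sum_periodic {R : Type*} [CommRing R] (g : ℕ → R) (N : ℕ)
    (hg : ∀ t, g (t + N) = g t) (M : ℕ) :
    ∑ t ∈ range (M * N), g t = M • ∑ t ∈ range N, g t := by
  have hgen : ∀ c t, g (t + c * N) = g t := by
    intro c
    induction c with
    | zero => simp
    | succ u ih =>
        intro t
        have h : t + (u+1) * N = (t + u * N) + N := by ring
        rw [h, hg, ih]
  induction M with
  | zero => simp
  | succ M ih =>
      have h : (M + 1) * N = M * N + N := by ring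
      rw [h, Finset.sum_range_add, ih, succ_nsmul]
      congr 1
      refine Finset.sum_congr rfl fun i _ => ?_
      rw [add_comm (M*N) i, hgen]

lemma zmod_sum_cast {G : Type*} [AddCommMonoid G] (m : ℕ) [NeZero m] (g : ZMod m → G) :
    ∑ i ∈ range m, g (i : ZMod m) = ∑ u : ZMod m, g u :=
  Finset.sum_nbij' (i := fun i : ℕ => (i : ZMod m)) (j := fun u : ZMod m => u.val)
    (fun _ _ => mem_univ _) (fun u _ => mem_range.mpr u.val_lt)
    (fun a ha => ZMod.val_natCast_of_lt (mem_range.mp ha))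
    (fun u _ => ZMod.natCast_rightInverse u)
    (fun _ _ => rfl)

lemma sum_reindex (p d m : ℕ) (hm : 0 < m) (hme : Even m) (c e : ℕ)
    (hc : Nat.Coprime c m) (hco : Odd c) (ε : F) (hε : ε ^ 2 = 1) (z : F)
    (hz : z ^ p ^ (d * m) = z) :
    ∑ i ∈ range m, ε ^ i * z ^ p ^ (d * (c * i + e))
      = ε ^ e * ∑ i ∈ range m, ε ^ i * z ^ p ^ (d * i) := by
  haveI : NeZero m := ⟨hm.ne'⟩
  have h2m : (2 : ℕ) ∣ m := hme.two_dvd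
  set f : ZMod m → F := fun u => ε ^ u.val * z ^ p ^ (d * u.val) with hf
  have step1 : ∀ i ∈ range m, ε ^ i * z ^ p ^ (d * (c * i + e))
      = ε ^ e * f ((c : ZMod m) * (i : ZMod m) + (e : ZMod m)) := by
    intro i _
    have hcast : (c : ZMod m) * (i : ZMod m) + (e : ZMod m) = ((c * i + e : ℕ) : ZMod m) := by
      push_cast; ring
    rw [hcast, hf]
    simp only [ZMod.val_natCast]
    have hzpart : z ^ p ^ (d * (c * i + e)) = z ^ p ^ (d * ((c * i + e) % m)) :=
      pow_pow_congr p (d * m) z hz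
        ((Nat.ModEq.mul_left' d (Nat.mod_modEq (c * i + e) m)).symm)
    have hepart : ε ^ i = ε ^ e * ε ^ ((c * i + e) % m) := by
      rw [← pow_add]
      refine eps_pow_congr ε hε ?_
      have hv : (c * i + e) % m ≡ c * i + e [MOD 2] := (Nat.mod_modEq _ m).of_dvd h2m
      have h1 : e + (c * i + e) % m ≡ e + (c * i + e) [MOD 2] := hv.add_left e
      have h2 : e + (c * i + e) ≡ c * i [MOD 2] := by
        unfold Nat.ModEq; omega
      have h3 : c * i ≡ i [MOD 2] := by
        obtain ⟨r, hr⟩ := hco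
        subst hr
        have hx : (2 * r + 1) * i = 2 * (r * i) + i := by ring
        unfold Nat.ModEq; rw [hx]; omega
      exact ((h1.trans h2).trans h3).symm
    rw [hzpart, hepart, mul_assoc]
  rw [Finset.sum_congr rfl step1, ← Finset.mul_sum]
  congr 1
  have step2 : ∑ i ∈ range m, f ((c : ZMod m) * (i : ZMod m) + (e : ZMod m))
      = ∑ u : ZMod m, f ((c : ZMod m) * u + (e : ZMod m)) :=
    zmod_sum_cast m (fun u => f ((c : ZMod m) * u + (e : ZMod m)))
  rw [step2]
  have hunit : IsUnit (c : ZMod m) := (ZMod.isUnit_iff_coprime c m).mpr hc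
  have hbij : Function.Bijective (fun u : ZMod m => (c : ZMod m) * u + (e : ZMod m)) := by
    have h1 : Function.Bijective (fun u : ZMod m => (c : ZMod m) * u) :=
      IsUnit.isUnit_iff_mulLeft_bijective.mp hunit
    have h2 : Function.Bijective (fun u : ZMod m => u + (e : ZMod m)) :=
      (Equiv.addRight ((e : ZMod m))).bijective
    exact h2.comp h1
  rw [hbij.sum_comp f, ← zmod_sum_cast m f]
  refine Finset.sum_congr rfl fun i hi => ?_
  rw [hf]
  simp only [ZMod.val_natCast_of_lt (mem_range.mp hi)]

open Polynomial in
lemma exists_delta (p : ℕ) [Fact p.Prime] (d m n : ℕ) (hd : 0 < d) (hm : 2 ≤ m)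
    (hn : n = d * m) :
    ∃ δ : AlgebraicClosure (ZMod p), δ ^ p ^ n = δ ∧
      ∑ i ∈ range m, δ ^ p ^ (d * i) = 1 := by
  classical
  set F := AlgebraicClosure (ZMod p)
  have hp1 : 1 < p := (Fact.out : p.Prime).one_lt
  have hn0 : 0 < n := by subst hn; positivity
  have hpn1 : 1 < p ^ n := Nat.one_lt_pow hn0.ne' hp1
  set P : F[X] := X ^ p ^ n - X with hP
  set Q : F[X] := ∑ i ∈ range m, X ^ p ^ (d * i) with hQ
  have hPdeg : P.natDegree = p ^ n := by
    rw [hP, natDegree_sub_eq_left_of_natDegree_lt, natDegree_X_pow]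
    rw [natDegree_X_pow, natDegree_X]; exact hpn1
  have hP0 : P ≠ 0 := by
    intro h; rw [h, natDegree_zero] at hPdeg; omega
  have hder : derivative P = -1 := by
    have hcast : ((p ^ n : ℕ) : F) = 0 :=
      (CharP.cast_eq_zero_iff F p _).mpr (dvd_pow_self p hn0.ne')
    rw [hP]
    simp [derivative_X_pow, hcast]
  have hsep : P.Separable := by
    rw [Polynomial.separable_def, hder]
    exact IsCoprime.neg_right isCoprime_one_right
  have hcard : Multiset.card P.roots = p ^ n := by
    rw [← hPdeg]
    exact splits_iff_card_roots.mp (IsAlgClosed.splits P)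
  have hnodup : P.roots.Nodup := Polynomial.nodup_roots hsep
  have hcardF : P.roots.toFinset.card = p ^ n := by
    rw [Multiset.toFinset_card_of_nodup hnodup, hcard]
  have hQco : Q.coeff (p ^ (d * (m - 1))) = 1 := by
    rw [hQ, finset_sum_coeff]
    simp only [coeff_X_pow]
    rw [Finset.sum_eq_single (m - 1)]
    · rw [if_pos rfl]
    · intro b _ hb
      rw [if_neg]
      intro hcon
      have h := Nat.pow_right_injective hp1 hcon
      exact hb (Nat.eq_of_mul_eq_mul_left hd h.symm)
    · intro hcon
      exact absurd (Finset.mem_range.mpr (by omega)) hcon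
  have hQ0 : Q ≠ 0 := by
    intro h; rw [h, coeff_zero] at hQco; exact one_ne_zero hQco.symm
  have hQdeg : Q.natDegree ≤ p ^ (d * (m - 1)) := by
    refine natDegree_sum_le_of_forall_le _ _ fun i hi => ?_
    rw [natDegree_X_pow]
    exact Nat.pow_le_pow_right hp1.le
      (Nat.mul_le_mul_left d (by have := Finset.mem_range.mp hi; omega))
  have hδ0 : ∃ δ : F, δ ^ p ^ n = δ ∧ (∑ i ∈ range m, δ ^ p ^ (d * i)) ≠ 0 := by
    by_contra hcon
    push_neg at hcon
    have hsub : P.roots.toFinset ⊆ Q.roots.toFinset := by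
      intro δ hδ
      rw [Multiset.mem_toFinset, Polynomial.mem_roots hP0] at hδ
      have hδF : δ ^ p ^ n = δ := by
        have h := hδ
        rw [hP, IsRoot, eval_sub, eval_pow, eval_X] at h
        exact sub_eq_zero.mp h
      rw [Multiset.mem_toFinset, Polynomial.mem_roots hQ0]
      rw [hQ, IsRoot, eval_finset_sum]
      simp only [eval_pow, eval_X]
      exact hcon δ hδF
    have hle : p ^ n ≤ p ^ (d * (m - 1)) := by
      calc p ^ n = P.roots.toFinset.card := hcardF.symm
        _ ≤ Q.roots.toFinset.card := Finset.card_le_card hsub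
        _ ≤ Multiset.card Q.roots := Multiset.toFinset_card_le _
        _ ≤ Q.natDegree := Polynomial.card_roots' Q
        _ ≤ p ^ (d * (m - 1)) := hQdeg
    have hlt : d * (m - 1) < n := by
      rw [hn]
      exact (Nat.mul_lt_mul_left hd).mpr (by omega)
    exact absurd hle (not_le.mpr (Nat.pow_lt_pow_right hp1 hlt))
  obtain ⟨δ₀, hδ₀F, hδ₀T⟩ := hδ0
  set c : F := ∑ i ∈ range m, δ₀ ^ p ^ (d * i) with hc
  have hcd : c ^ p ^ d = c := by
    have hmap : c ^ p ^ d = ∑ i ∈ range m, δ₀ ^ p ^ (d * (i + 1)) := by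
      rw [hc, ← iterateFrobenius_def (R := F) (p := p) (n := d), map_sum]
      refine Finset.sum_congr rfl fun i _ => ?_
      rw [map_pow, iterateFrobenius_def, ← pow_mul, ← pow_add]
      ring_nf
    rw [hmap]
    have h := sum_sub_sum_shift (fun i => δ₀ ^ p ^ (d * i)) m
    have hgm : δ₀ ^ p ^ (d * m) = δ₀ ^ p ^ (d * 0) := by
      rw [← hn, hδ₀F, Nat.mul_zero, pow_zero, pow_one]
    rw [hgm] at h
    have h0 : (∑ i ∈ range m, δ₀ ^ p ^ (d * i)) - ∑ i ∈ range m, δ₀ ^ p ^ (d * (i + 1)) = 0 := by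
      rw [h]; exact sub_self _
    rw [hc]
    exact (sub_eq_zero.mp h0).symm
  have hcdi : ∀ j, c ^ p ^ (d * j) = c := by
    intro j
    induction j with
    | zero => simp
    | succ t ih =>
        have h : d * (t + 1) = d * t + d := by ring
        rw [h, pow_add, pow_mul, ih, hcd]
  have hcn : c ^ p ^ n = c := by rw [hn]; exact hcdi m
  refine ⟨c⁻¹ * δ₀, ?_, ?_⟩
  · rw [mul_pow, inv_pow, hcn, hδ₀F]
  · have h : ∀ i ∈ range m, (c⁻¹ * δ₀) ^ p ^ (d * i) = c⁻¹ * δ₀ ^ p ^ (d * i) := by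
      intro i _
      rw [mul_pow, inv_pow, hcdi i]
    rw [Finset.sum_congr rfl h, ← Finset.mul_sum, ← hc, inv_mul_cancel₀ hδ₀T]

end Stmt17Aux
open Finset Stmt17Aux

noncomputable abbrev Fcl (p : ℕ) [Fact p.Prime] : Type _ := AlgebraicClosure (ZMod p)

set_option maxHeartbeats 2000000 in
theorem stmt17 (p : ℕ) [Fact p.Prime] (hp2 : p ≠ 2) (n k l : ℕ)
    (hn : 0 < n) (hk : 0 < k) (hl : 0 < l)
    (hlk : l ∣ k) (hkl : Odd (k / l)) (d L : ℕ)
    (hd : d = Nat.gcd n k) (hL : L = Nat.lcm d l)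
    (hnd : Even (n / d)) (hpk : p ∣ k / L)
    (a : AlgebraicClosure (ZMod p)) (ha : a ∈ Ffield p n) :
    ((∃ x ∈ Ffield p n, Smap p l k x = a) ↔ Smap p d n a = 0) ∧
    (Smap p d n a = 0 → ∀ δ ∈ Ffield p n, Tmap p d n δ = 1 →
      ∀ x₀, x₀ = Tmap p l (2 * l) (∑ i ∈ Finset.range (n / d - 1),
          ∑ j ∈ Finset.Ico (i + 1) (n / d),
          (-1 : AlgebraicClosure (ZMod p)) ^ i * δ ^ p ^ (k * j) * a ^ p ^ (k * i)) →
        x₀ ∈ Ffield p n ∧ Smap p l k x₀ = a) := by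
  -- arithmetic facts
  have hp1 : 1 < p := (Fact.out : p.Prime).one_lt
  have hpodd : Odd p := (Fact.out : p.Prime).odd_of_ne_two hp2
  have hdn : d ∣ n := hd ▸ Nat.gcd_dvd_left n k
  have hdk : d ∣ k := hd ▸ Nat.gcd_dvd_right n k
  have hd0 : 0 < d := hd ▸ Nat.gcd_pos_of_pos_left k hn
  set m := n / d with hm
  have hnm : n = d * m := (Nat.mul_div_cancel' hdn).symm
  have hm0 : 0 < m := Nat.div_pos (Nat.le_of_dvd hn hdn) hd0
  have hme : Even m := hnd
  have hm2 : 2 ≤ m := by obtain ⟨t, ht⟩ := hme; omega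
  have hLl : l ∣ L := hL ▸ Nat.dvd_lcm_right d l
  have hLd : d ∣ L := hL ▸ Nat.dvd_lcm_left d l
  have hLk : L ∣ k := hL ▸ Nat.lcm_dvd hdk hlk
  have hL0 : 0 < L := Nat.pos_of_dvd_of_pos hLk hk
  obtain ⟨ML, hML⟩ := hLk
  obtain ⟨NL, hNL⟩ := hLl
  have hkl_fact : k = l * (NL * ML) := by rw [hML, hNL]; ring
  have hkl_div : k / l = NL * ML := by rw [hkl_fact]; exact Nat.mul_div_cancel_left _ hl
  have hkL_div : k / L = ML := by rw [hML]; exact Nat.mul_div_cancel_left _ hL0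
  have hNLodd : Odd NL ∧ Odd ML := Nat.odd_mul.mp (hkl_div ▸ hkl)
  have hpML : p ∣ ML := hkL_div ▸ hpk
  have hck : Nat.Coprime (k / d) m := by
    have h := Nat.coprime_div_gcd_div_gcd (m := n) (n := k) (hd ▸ hd0)
    rw [← hd] at h
    exact h.symm
  have hkd_odd : Odd (k / d) := by
    rcases Nat.even_or_odd (k / d) with he | ho
    · exfalso
      have h2 : (2 : ℕ) ∣ Nat.gcd (k / d) m := Nat.dvd_gcd he.two_dvd hme.two_dvd
      rw [Nat.Coprime] at hck
      rw [hck] at h2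
      omega
    · exact ho
  have hgnL : Nat.gcd n L = d := by
    refine Nat.dvd_antisymm ?_ (Nat.dvd_gcd hdn hLd)
    rw [hd]
    exact Nat.dvd_gcd (Nat.gcd_dvd_left n L)
      ((Nat.gcd_dvd_right n L).trans ⟨ML, hML⟩)
  have hcL : Nat.Coprime (L / d) m := by
    have h := Nat.coprime_div_gcd_div_gcd (m := n) (n := L) (hgnL ▸ hd0)
    rw [hgnL] at h
    exact h.symm
  have hLd_odd : Odd (L / d) := by
    rcases Nat.even_or_odd (L / d) with he | ho
    · exfalso
      have h2 : (2 : ℕ) ∣ Nat.gcd (L / d) m := Nat.dvd_gcd he.two_dvd hme.two_dvd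
      rw [Nat.Coprime] at hcL
      rw [hcL] at h2
      omega
    · exact ho
  have hdLd : d * (L / d) = L := Nat.mul_div_cancel' hLd
  obtain ⟨kd, hkd⟩ := hdk
  have hdk : d ∣ k := ⟨kd, hkd⟩
  have hkd' : kd = k / d := by rw [hkd]; exact (Nat.mul_div_cancel_left _ hd0).symm
  have hkmn : n ∣ k * m := ⟨kd, by rw [hkd, hnm]; ring⟩
  -- Frobenius helpers
  have hmapsum : ∀ (s : ℕ) (t : Finset ℕ) (f : ℕ → (Fcl p)),
      (∑ i ∈ t, f i) ^ p ^ s = ∑ i ∈ t, f i ^ p ^ s := by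
    intro s t f
    calc (∑ i ∈ t, f i) ^ p ^ s = iterateFrobenius (Fcl p) p s (∑ i ∈ t, f i) :=
          (iterateFrobenius_def (R := (Fcl p)) (p := p) (n := s) (x := ∑ i ∈ t, f i)).symm
      _ = ∑ i ∈ t, iterateFrobenius (Fcl p) p s (f i) := map_sum _ _ _
      _ = ∑ i ∈ t, f i ^ p ^ s := by simp [iterateFrobenius_def]
  have hfrobadd : ∀ (s : ℕ) (u v : (Fcl p)), (u + v) ^ p ^ s = u ^ p ^ s + v ^ p ^ s := by
    intro s u v
    rw [← iterateFrobenius_def (R := (Fcl p)) (p := p) (n := s), map_add, iterateFrobenius_def, iterateFrobenius_def]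
  have hneg1 : ∀ s : ℕ, (-1 : (Fcl p)) ^ p ^ s = -1 := fun s => Odd.neg_one_pow (hpodd.pow)
  have hpowpow : ∀ (z : (Fcl p)) (b s : ℕ), (z ^ p ^ b) ^ p ^ s = z ^ p ^ (b + s) := by
    intro z b s
    rw [← pow_mul, ← pow_add]
  have hnegterm : ∀ (s i : ℕ) (z : (Fcl p)), ((-1 : (Fcl p)) ^ i * z) ^ p ^ s = (-1 : (Fcl p)) ^ i * z ^ p ^ s := by
    intro s i z
    rw [mul_pow, ← pow_right_comm, hneg1]
  -- Ŝ and T̂ identities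
  have hShat : ∀ z : (Fcl p), z ^ p ^ n = z →
      ∑ i ∈ range m, (-1 : (Fcl p)) ^ i * z ^ p ^ (k * i) = Smap p d n z := by
    intro z hz
    have h1 : ∀ i ∈ range m, (-1 : (Fcl p)) ^ i * z ^ p ^ (k * i)
        = (-1 : (Fcl p)) ^ i * z ^ p ^ (d * ((k / d) * i + 0)) := by
      intro i _
      have he : d * ((k / d) * i + 0) = k * i := by
        rw [Nat.add_zero, ← Nat.mul_assoc, Nat.mul_div_cancel' hdk]
      rw [he]
    rw [Finset.sum_congr rfl h1,
      sum_reindex p d m hm0 hme (k / d) 0 hck hkd_odd (-1 : (Fcl p)) (by ring) z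
        (by rw [← hnm]; exact hz),
      pow_zero, one_mul, Smap, ← hm]
  have hThat : ∀ z : (Fcl p), z ^ p ^ n = z →
      ∑ i ∈ range m, z ^ p ^ (k * i) = Tmap p d n z := by
    intro z hz
    have h1 : ∀ i ∈ range m, z ^ p ^ (k * i)
        = (1 : (Fcl p)) ^ i * z ^ p ^ (d * ((k / d) * i + 0)) := by
      intro i _
      have he : d * ((k / d) * i + 0) = k * i := by
        rw [Nat.add_zero, ← Nat.mul_assoc, Nat.mul_div_cancel' hdk]
      rw [he, one_pow, one_mul]
    rw [Finset.sum_congr rfl h1,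
      sum_reindex p d m hm0 hme (k / d) 0 hck hkd_odd (1 : (Fcl p)) (by ring) z
        (by rw [← hnm]; exact hz),
      one_pow, one_mul, Tmap, ← hm]
    simp only [one_pow, one_mul]
  -- telescoping
  have htel : ∀ z : (Fcl p), Smap p l k z + Smap p l k z ^ p ^ l = z + z ^ p ^ k := by
    intro z
    have hlM : l * (k / l) = k := Nat.mul_div_cancel' hlk
    set gg : ℕ → (Fcl p) := fun i => (-1 : (Fcl p)) ^ i * z ^ p ^ (l * i) with hgg
    have h2 : Smap p l k z ^ p ^ l = -∑ i ∈ range (k / l), gg (i + 1) := by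
      rw [Smap, hmapsum, ← Finset.sum_neg_distrib]
      refine Finset.sum_congr rfl fun i _ => ?_
      rw [hnegterm, hpowpow, hgg]
      simp only
      have he : l * i + l = l * (i + 1) := by ring
      rw [he, pow_succ]
      ring
    have h3 := sum_sub_sum_shift gg (k / l)
    have hg0 : gg 0 = z := by rw [hgg]; simp
    have hgM : gg (k / l) = -(z ^ p ^ k) := by
      rw [hgg]
      simp only
      rw [hlM, Odd.neg_one_pow hkl]
      ring
    rw [h2, Smap]
    have hSz : ∑ i ∈ range (k / l), (-1 : (Fcl p)) ^ i * z ^ p ^ (l * i)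
        = ∑ i ∈ range (k / l), gg i := rfl
    rw [hSz]
    rw [hg0, hgM] at h3
    linear_combination h3
  have hSadd : ∀ u v : (Fcl p), Smap p l k (u + v) = Smap p l k u + Smap p l k v := by
    intro u v
    rw [Smap, Smap, Smap, ← Finset.sum_add_distrib]
    refine Finset.sum_congr rfl fun i _ => ?_
    rw [hfrobadd]
    ring
  have hSfrobs : ∀ (s : ℕ) (z : (Fcl p)), Smap p l k (z ^ p ^ s) = Smap p l k z ^ p ^ s := by
    intro s z
    rw [Smap, Smap, hmapsum]
    refine Finset.sum_congr rfl fun i _ => ?_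
    rw [hnegterm, hpowpow, hpowpow, Nat.add_comm]
  -- necessity
  have nec : ∀ x : (Fcl p), x ^ p ^ n = x → Smap p d n (Smap p l k x) = 0 := by
    intro x hx
    set w : (Fcl p) := ∑ i ∈ range m, (-1 : (Fcl p)) ^ i * x ^ p ^ (d * i) with hw
    have hL1 : Smap p d n (Smap p l k x)
        = ∑ u ∈ range m, ∑ t ∈ range (k / l), (-1 : (Fcl p)) ^ (u + t) * x ^ p ^ (l * t + d * u) := by
      rw [Smap, ← hm]
      refine Finset.sum_congr rfl fun u _ => ?_
      rw [Smap, hmapsum, Finset.mul_sum]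
      refine Finset.sum_congr rfl fun t _ => ?_
      rw [hnegterm, hpowpow, Nat.add_comm (l * t) (d * u), pow_add (-1 : (Fcl p)) u t]
      ring
    have hR1 : Smap p l k w
        = ∑ t ∈ range (k / l), ∑ u ∈ range m, (-1 : (Fcl p)) ^ (u + t) * x ^ p ^ (l * t + d * u) := by
      rw [Smap]
      refine Finset.sum_congr rfl fun t _ => ?_
      rw [hw, hmapsum, Finset.mul_sum]
      refine Finset.sum_congr rfl fun u _ => ?_
      rw [hnegterm, hpowpow, Nat.add_comm (d * u) (l * t), pow_add (-1 : (Fcl p)) u t]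
      ring
    rw [hL1, ← Finset.sum_comm, ← hR1]
    -- now show Smap p l k w = 0
    have hwL : w ^ p ^ L = -w := by
      have h1 : w ^ p ^ L = ∑ u ∈ range m, (-1 : (Fcl p)) ^ u * x ^ p ^ (d * (1 * u + L / d)) := by
        rw [hw, hmapsum]
        refine Finset.sum_congr rfl fun u _ => ?_
        rw [hnegterm, hpowpow]
        have he : d * u + L = d * (1 * u + L / d) := by
          rw [Nat.mul_add, Nat.one_mul, hdLd]
        rw [he]
      rw [h1, sum_reindex p d m hm0 hme 1 (L / d) (Nat.coprime_one_left m) odd_one (-1 : (Fcl p))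
        (by ring) x (by rw [← hnm]; exact hx), Odd.neg_one_pow hLd_odd, ← hw]
      ring
    set g : ℕ → (Fcl p) := fun t => (-1 : (Fcl p)) ^ t * w ^ p ^ (l * t) with hg
    have hper : ∀ t, g (t + NL) = g t := by
      intro t
      rw [hg]
      simp only
      have he : l * (t + NL) = L + l * t := by rw [Nat.mul_add, ← hNL]; ring
      have h1 : w ^ p ^ (L + l * t) = -(w ^ p ^ (l * t)) := by
        rw [← hpowpow w L (l * t), hwL, Odd.neg_pow (hpodd.pow)]
      rw [he, h1, pow_add (-1 : (Fcl p)) t NL, Odd.neg_one_pow hNLodd.1]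
      ring
    have hfin : Smap p l k w = 0 := by
      have hSw : Smap p l k w = ∑ t ∈ range (ML * NL), g t := by
        rw [Smap, hkl_div, Nat.mul_comm NL ML]
      rw [hSw, sum_periodic g NL hper ML, nsmul_eq_mul,
        (CharP.cast_eq_zero_iff (Fcl p) p ML).mpr hpML, zero_mul]
    exact hfin
  -- sufficiency
  have haF : a ^ p ^ n = a := ha
  have main2 : Smap p d n a = 0 → ∀ δ ∈ Ffield p n, Tmap p d n δ = 1 →
      ∀ x₀, x₀ = Tmap p l (2 * l) (∑ i ∈ Finset.range (m - 1),
          ∑ j ∈ Finset.Ico (i + 1) m,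
          (-1 : (Fcl p)) ^ i * δ ^ p ^ (k * j) * a ^ p ^ (k * i)) →
        x₀ ∈ Ffield p n ∧ Smap p l k x₀ = a := by
    intro hA δ hδ hδT x₀ hx₀
    have hδF : δ ^ p ^ n = δ := hδ
    set Y : (Fcl p) := ∑ i ∈ Finset.range (m - 1), ∑ j ∈ Finset.Ico (i + 1) m,
        (-1 : (Fcl p)) ^ i * δ ^ p ^ (k * j) * a ^ p ^ (k * i) with hY
    have hx₀' : x₀ = Y + Y ^ p ^ l := by
      rw [hx₀, Tmap, Nat.mul_div_cancel 2 hl]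
      rw [Finset.sum_range_succ, Finset.sum_range_one]
      norm_num
    obtain ⟨D, hD⟩ : ∃ D : ℕ → (Fcl p), D = fun j => δ ^ p ^ (k * j) := ⟨_, rfl⟩
    obtain ⟨Aa, hAa⟩ : ∃ Aa : ℕ → (Fcl p), Aa = fun i => a ^ p ^ (k * i) := ⟨_, rfl⟩
    obtain ⟨R, hR⟩ : ∃ R : ℕ → (Fcl p), R = fun i => ∑ j ∈ Finset.Ico i m, D j := ⟨_, rfl⟩
    obtain ⟨g, hg⟩ : ∃ g : ℕ → (Fcl p), g = fun i => (-1 : (Fcl p)) ^ i * Aa i * R (i + 1) :=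
      ⟨_, rfl⟩
    obtain ⟨G, hG⟩ : ∃ G : ℕ → (Fcl p), G = fun i => (-1 : (Fcl p)) ^ i * Aa i := ⟨_, rfl⟩
    have hDm : D m = δ := by
      simp only [hD]
      have h := pow_pow_congr p n δ hδF (s := k * m) (t := 0)
        ((Nat.modEq_zero_iff_dvd).mpr hkmn)
      rw [h, pow_zero, pow_one]
    have hAa0 : Aa 0 = a := by simp only [hAa]; simp
    have hYg : Y = ∑ i ∈ range (m - 1), g i := by
      simp only [hg, hAa, hR, hD, hY]
      refine Finset.sum_congr rfl fun i _ => ?_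
      rw [Finset.mul_sum]
      exact Finset.sum_congr rfl fun j _ => by ring
    have hYfrob : Y ^ p ^ k
        = ∑ i ∈ range (m - 1), (-1 : (Fcl p)) ^ i * Aa (i + 1) * (R (i + 2) + δ) := by
      have h1 : Y ^ p ^ k = ∑ i ∈ range (m - 1), ∑ j ∈ Finset.Ico (i + 1) m,
          (-1 : (Fcl p)) ^ i * D (j + 1) * Aa (i + 1) := by
        simp only [hD, hAa]
        rw [hY, hmapsum]
        refine Finset.sum_congr rfl fun i _ => ?_
        rw [hmapsum]
        refine Finset.sum_congr rfl fun j _ => ?_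
        rw [mul_pow, mul_pow, ← pow_right_comm ((-1 : (Fcl p))), hneg1, hpowpow, hpowpow]
        have e1 : k * j + k = k * (j + 1) := by ring
        have e2 : k * i + k = k * (i + 1) := by ring
        rw [e1, e2]
      rw [h1]
      refine Finset.sum_congr rfl fun i hi => ?_
      have him : i + 2 ≤ m := by have := Finset.mem_range.mp hi; omega
      have h2 : ∑ j ∈ Finset.Ico (i + 1) m, D (j + 1)
          = ∑ j ∈ Finset.Ico (i + 2) (m + 1), D j := by
        have hmap := Finset.map_add_right_Ico (i + 1) m 1
        rw [← hmap, Finset.sum_map]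
        rfl
      have h3 : ∑ j ∈ Finset.Ico (i + 2) (m + 1), D j = R (i + 2) + δ := by
        rw [Finset.sum_Ico_succ_top him, hDm]
        simp only [hR]
      calc ∑ j ∈ Finset.Ico (i + 1) m, (-1 : (Fcl p)) ^ i * D (j + 1) * Aa (i + 1)
          = (-1 : (Fcl p)) ^ i * Aa (i + 1) * ∑ j ∈ Finset.Ico (i + 1) m, D (j + 1) := by
            rw [Finset.mul_sum]; exact Finset.sum_congr rfl fun j _ => by ring
        _ = (-1 : (Fcl p)) ^ i * Aa (i + 1) * (R (i + 2) + δ) := by rw [h2, h3]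
    have hSa0 : ∑ i ∈ range m, G i = 0 := by
      simp only [hG, hAa]
      rw [hShat a haF]
      exact hA
    have hA2 : ∑ i ∈ range (m - 1), G (i + 1) = -a := by
      have h := Finset.sum_range_succ' G (m - 1)
      rw [show m - 1 + 1 = m by omega] at h
      have hG0 : G 0 = a := by simp only [hG, hAa]; simp
      rw [hSa0, hG0] at h
      linear_combination -h
    have hsum1 : (∑ i ∈ range (m - 1), g i) - ∑ i ∈ range (m - 1), g (i + 1)
        = g 0 - g (m - 1) := sum_sub_sum_shift g (m - 1)
    have hR1v : R 1 = 1 - δ := by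
      have h := Finset.sum_eq_sum_Ico_succ_bot hm0 D
      have hT : ∑ j ∈ range m, D j = 1 := by
        simp only [hD]
        rw [hThat δ hδF]
        exact hδT
      have hD0 : D 0 = δ := by simp only [hD]; simp
      rw [Finset.range_eq_Ico] at hT
      rw [h, hD0] at hT
      simp only [hR]
      linear_combination hT
    have hg0 : g 0 = a * (1 - δ) := by
      simp only [hg]
      rw [hAa0, hR1v]
      ring
    have hgm1 : g (m - 1) = 0 := by
      simp only [hg]
      rw [show m - 1 + 1 = m by omega]
      have hRm : R m = 0 := by simp only [hR]; simp
      rw [hRm]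
      ring
    have hYfrob' : Y ^ p ^ k = (-∑ i ∈ range (m - 1), g (i + 1)) + a * δ := by
      rw [hYfrob]
      have expand : ∀ i ∈ range (m - 1), (-1 : (Fcl p)) ^ i * Aa (i + 1) * (R (i + 2) + δ)
          = -g (i + 1) + -G (i + 1) * δ := by
        intro i _
        simp only [hg, hG]
        rw [pow_succ]
        ring
      rw [Finset.sum_congr rfl expand, Finset.sum_add_distrib, Finset.sum_neg_distrib,
        ← Finset.sum_mul, Finset.sum_neg_distrib, hA2]
      ring
    have hkey : Y + Y ^ p ^ k = a := by
      rw [hYfrob', hYg]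
      linear_combination hsum1 + hg0 - hgm1
    have hYF : Y ^ p ^ n = Y := by
      rw [hY, hmapsum]
      refine Finset.sum_congr rfl fun i _ => ?_
      rw [hmapsum]
      refine Finset.sum_congr rfl fun j _ => ?_
      rw [mul_pow, mul_pow, ← pow_right_comm ((-1 : (Fcl p))), hneg1]
      rw [← pow_right_comm δ, ← pow_right_comm a, hδF, haF]
    constructor
    · show x₀ ^ p ^ n = x₀
      rw [hx₀', hfrobadd, hYF, ← pow_right_comm Y, hYF]
    · rw [hx₀', hSadd, hSfrobs, htel, hkey]
  refine ⟨⟨?_, ?_⟩, ?_⟩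
  · rintro ⟨x, hxF, hxS⟩
    rw [← hxS]
    exact nec x hxF
  · intro hA
    obtain ⟨δ, hδF, hδT'⟩ := exists_delta p d m n hd0 hm2 hnm
    have hδT : Tmap p d n δ = 1 := by rw [Tmap, ← hm]; exact hδT'
    obtain ⟨hx₀F, hx₀S⟩ := main2 hA δ hδF hδT _ rfl
    exact ⟨_, hx₀F, hx₀S⟩
  · exact main2
end

section
/- Let p be an odd prime, let n, k, l be positive integers with l | k and k/l odd, and set d = gcd(n,k), e = gcd(n,l), L = lcm(d,l). Suppose n/d is even and p does not divide k/L. Let a ∈ 𝔽_{p^n}. Then the equation S_l^k(X) = a has a solution in 𝔽_{p^n} if and only if T_e^{2e}(S_d^n(a)) = 0. Moreover, in that case, for any δ ∈ 𝔽_{p^n} with T_d^n(δ) = 1 and any δ₁ ∈ 𝔽_{p^d} with T_{2e}^{2d}(δ₁) = 1, setting y₀ = Σ_{i=0}^{n/d−2} Σ_{j=i+1}^{n/d−1} (−1)^i δ^{p^{kj}} (T_l^{2l}(a))^{p^{ki}}, the element x₀ = y₀ + (L/(2k))·S_d^{2d}((a − S_l^k(y₀))·δ₁) lies in 𝔽_{p^n}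 and satisfies S_l^k(x₀) = a, where L/(2k) denotes the element (2k/L)^{−1} in 𝔽_p. -/
open Finset

namespace Stmt18Aux
variable {p : ℕ} [Fact p.Prime]
local notation "F" => AlgebraicClosure (ZMod p)

lemma ppa (x : F) (s t : ℕ) : (x ^ p ^ s) ^ p ^ t = x ^ p ^ (s + t) := by
  rw [← pow_mul, ← pow_add]

lemma frob_sum {ι : Type*} (s : Finset ι) (f : ι → F) (t : ℕ) :
    (∑ i ∈ s, f i) ^ p ^ t = ∑ i ∈ s, (f i) ^ p ^ t := by
  simpa only [iterateFrobenius_def] using map_sum (iterateFrobenius F p t) f s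

lemma frob_add (x y : F) (t : ℕ) : (x + y) ^ p ^ t = x ^ p ^ t + y ^ p ^ t :=
  add_pow_char_pow x y p t

lemma frob_sub (x y : F) (t : ℕ) : (x - y) ^ p ^ t = x ^ p ^ t - y ^ p ^ t := by
  simpa only [iterateFrobenius_def] using map_sub (iterateFrobenius F p t) x y

lemma frob_neg (x : F) (t : ℕ) : (-x) ^ p ^ t = -(x ^ p ^ t) := by
  simpa only [iterateFrobenius_def] using map_neg (iterateFrobenius F p t) x

lemma frob_neg_one (t : ℕ) : ((-1 : F)) ^ p ^ t = -1 := by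
  simpa only [iterateFrobenius_def, map_one] using map_neg (iterateFrobenius F p t) 1

lemma frob_neg_one_pow (i t : ℕ) : (((-1 : F)) ^ i) ^ p ^ t = (-1) ^ i := by
  rw [← pow_mul, mul_comm, pow_mul, frob_neg_one]

lemma frob_natCast (m t : ℕ) : ((m : F)) ^ p ^ t = (m : F) := by
  simpa only [iterateFrobenius_def] using map_natCast (iterateFrobenius F p t) m

lemma frob_inv (x : F) (t : ℕ) : (x⁻¹) ^ p ^ t = (x ^ p ^ t)⁻¹ := by
  simpa only [iterateFrobenius_def] using map_inv₀ (iterateFrobenius F p t) x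

/-- iterate: `x^{p^c} = x → x^{p^{c s}} = x` -/
lemma fix_mul {x : F} {c : ℕ} (hx : x ^ p ^ c = x) (s : ℕ) : x ^ p ^ (c * s) = x := by
  induction s with
  | zero => simp
  | succ s ih => rw [Nat.mul_succ, ← ppa, ih, hx]

/-- `x^{p^c} = -x → x^{p^{c s}} = (-1)^s x` -/
lemma skew_mul {x : F} {c : ℕ} (hx : x ^ p ^ c = -x) (s : ℕ) :
    x ^ p ^ (c * s) = (-1) ^ s * x := by
  induction s with
  | zero => simp
  | succ s ih =>
    rw [Nat.mul_succ, ← ppa, ih, mul_pow, frob_neg_one_pow, hx, pow_succ]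
    ring

lemma neg_one_pow_mod (a : ℕ) : ((-1 : F)) ^ a = (-1) ^ (a % 2) := by
  conv_lhs => rw [← Nat.div_add_mod a 2, pow_add, pow_mul, neg_one_sq, one_pow, one_mul]

lemma neg_one_pow_congr {a b : ℕ} (h : a % 2 = b % 2) : ((-1 : F)) ^ a = (-1) ^ b := by
  rw [neg_one_pow_mod a, neg_one_pow_mod b, h]

/-- gcd fixed-field lemma -/
lemma fix_gcd {x : F} : ∀ A B : ℕ, x ^ p ^ A = x → x ^ p ^ B = x →
    x ^ p ^ Nat.gcd A B = x
  | 0, B, _, hB => by simpa using hB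
  | (A+1), B, hA, hB => by
    rw [Nat.gcd_rec]
    have hmod : x ^ p ^ (B % (A+1)) = x := by
      have h1 : x ^ p ^ ((A+1) * (B / (A+1))) = x := fix_mul hA _
      calc x ^ p ^ (B % (A+1)) = (x ^ p ^ ((A+1) * (B / (A+1)))) ^ p ^ (B % (A+1)) := by
            rw [h1]
        _ = x ^ p ^ ((A+1) * (B / (A+1)) + B % (A+1)) := ppa ..
        _ = x := by rw [Nat.div_add_mod]; exact hB
    exact fix_gcd _ _ hmod hA
  decreasing_by exact Nat.mod_lt _ (Nat.succ_pos A)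

lemma per_iter (f : ℕ → F) (D : ℕ) (hf : ∀ i, f (i + D) = f i) (q x : ℕ) :
    f (q * D + x) = f x := by
  induction q with
  | zero => simp
  | succ q ih =>
    have : (q + 1) * D + x = q * D + x + D := by ring
    rw [this, hf, ih]

/-- periodic sum splits -/
lemma sum_period (f : ℕ → F) (D B : ℕ) (hf : ∀ i, f (i + D) = f i) :
    ∑ i ∈ Finset.range (B * D), f i = B • ∑ i ∈ Finset.range D, f i := by
  induction B with
  | zero => simp
  | succ B ih =>
    have h : (B + 1) * D = B * D + D := by ring
    rw [h, Finset.sum_range_add, ih, succ_nsmul]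
    congr 1
    exact Finset.sum_congr rfl fun x _ => per_iter f D hf B x

/-- reindexing by multiplication by a unit mod D -/
lemma sum_bij_mod (g : ℕ → F) (D A : ℕ) (hA : Nat.Coprime A D) (hD : 0 < D) :
    ∑ i ∈ Finset.range D, g (A * i % D) = ∑ j ∈ Finset.range D, g j := by
  rcases eq_or_lt_of_le (show 1 ≤ D from hD) with h1 | h1
  · rw [← h1]
    simp
  · obtain ⟨A', -, hA'⟩ := Nat.exists_mul_mod_eq_one_of_coprime hA h1
    have hAA' : A * A' % D = 1 % D := by rw [hA', Nat.one_mod_eq_one.mpr (by omega)]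
    refine Finset.sum_nbij' (fun i => A * i % D) (fun j => A' * j % D)
      (fun a _ => Finset.mem_range.mpr (Nat.mod_lt _ hD))
      (fun a _ => Finset.mem_range.mpr (Nat.mod_lt _ hD)) ?_ ?_ (fun a _ => rfl)
    · intro a ha
      have h2 : A' * (A * a % D) ≡ A' * (A * a) [MOD D] :=
        Nat.ModEq.mul_left _ (Nat.mod_modEq _ _)
      have h3 : A' * (A * a) = (A * A') * a := by ring
      have h4 : (A * A') * a ≡ 1 * a [MOD D] := Nat.ModEq.mul_right _ hAA'
      have : A' * (A * a % D) ≡ a [MOD D] := by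
        calc A' * (A * a % D) ≡ A' * (A * a) [MOD D] := h2
          _ = (A * A') * a := h3
          _ ≡ 1 * a [MOD D] := h4
          _ = a := one_mul a
      calc A' * (A * a % D) % D = a % D := this
        _ = a := Nat.mod_eq_of_lt (Finset.mem_range.mp ha)
    · intro a ha
      have h2 : A * (A' * a % D) ≡ A * (A' * a) [MOD D] :=
        Nat.ModEq.mul_left _ (Nat.mod_modEq _ _)
      have h3 : A * (A' * a) = (A * A') * a := by ring
      have h4 : (A * A') * a ≡ 1 * a [MOD D] := Nat.ModEq.mul_right _ hAA'
      have : A * (A' * a % D) ≡ a [MOD D] := by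
        calc A * (A' * a % D) ≡ A * (A' * a) [MOD D] := h2
          _ = (A * A') * a := h3
          _ ≡ 1 * a [MOD D] := h4
          _ = a := one_mul a
      calc A * (A' * a % D) % D = a % D := this
        _ = a := Nat.mod_eq_of_lt (Finset.mem_range.mp ha)

/-- telescoping: `S + S^{p^c} = x - (-1)^K x^{p^{cK}}` for `S = Σ_{i<K} (-1)^i x^{p^{ci}}` -/
lemma telescope (x : F) (c K : ℕ) :
    (∑ i ∈ Finset.range K, (-1 : F) ^ i * x ^ p ^ (c * i)) +
      (∑ i ∈ Finset.range K, (-1 : F) ^ i * x ^ p ^ (c * i)) ^ p ^ c =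
    x - (-1) ^ K * x ^ p ^ (c * K) := by
  set g : ℕ → F := fun t => (-1 : F) ^ t * x ^ p ^ (c * t) with hg
  have hshift : (∑ i ∈ Finset.range K, g i) ^ p ^ c = ∑ i ∈ Finset.range K, -g (i + 1) := by
    rw [frob_sum]
    refine Finset.sum_congr rfl fun i _ => ?_
    rw [hg]
    simp only
    rw [mul_pow, frob_neg_one_pow, ppa]
    have : c * i + c = c * (i + 1) := by ring
    rw [this, pow_succ]
    ring
  rw [hshift, Finset.sum_neg_distrib]
  have h2 : ∑ i ∈ Finset.range K, g (i + 1) =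
      (∑ i ∈ Finset.range K, g i) + g K - g 0 := by
    have := Finset.sum_range_succ' g K
    have h3 := Finset.sum_range_succ g K
    rw [h3] at this
    linear_combination -this
  rw [h2]
  have hg0 : g 0 = x := by simp [hg]
  have hgK : g K = (-1) ^ K * x ^ p ^ (c * K) := rfl
  rw [hg0, hgK]
  ring

lemma h90 (m k' : ℕ) (hm : 1 ≤ m) (δ b : F) (hδ : δ ^ p ^ (k' * m) = δ) :
    (∑ i ∈ Finset.range (m-1), ∑ j ∈ Finset.Ico (i+1) m,
        (-1:F)^i * δ ^ p ^ (k'*j) * b ^ p ^ (k'*i))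
    + (∑ i ∈ Finset.range (m-1), ∑ j ∈ Finset.Ico (i+1) m,
        (-1:F)^i * δ ^ p ^ (k'*j) * b ^ p ^ (k'*i)) ^ p ^ k'
    = b * (∑ j ∈ Finset.range m, δ ^ p ^ (k'*j))
      - δ * (∑ i ∈ Finset.range m, (-1:F)^i * b ^ p ^ (k'*i)) := by
  set G : ℕ → F := fun i => (-1:F)^i * b ^ p ^ (k'*i) *
    (∑ j ∈ Finset.Ico (i+1) m, δ ^ p ^ (k'*j)) with hG
  have hy : ∀ s : Finset ℕ, ∑ i ∈ s, ∑ j ∈ Finset.Ico (i+1) m,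
      (-1:F)^i * δ ^ p ^ (k'*j) * b ^ p ^ (k'*i) = ∑ i ∈ s, G i := by
    intro s
    refine Finset.sum_congr rfl fun i _ => ?_
    rw [hG]
    simp only
    rw [Finset.mul_sum]
    exact Finset.sum_congr rfl fun j _ => by ring
  rw [hy]
  -- step 1: the Frobenius image
  have hstep : (∑ i ∈ Finset.range (m-1), G i) ^ p ^ k'
      = ∑ i ∈ Finset.range (m-1), ((-G (i+1)) + (-1:F)^i * b ^ p ^ (k'*(i+1)) * δ) := by
    rw [frob_sum]
    refine Finset.sum_congr rfl fun i hi => ?_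
    have him : i + 2 ≤ m := by
      have := Finset.mem_range.mp hi
      omega
    have h1 : (G i) ^ p ^ k' = (-1:F)^i * b ^ p ^ (k'*(i+1)) *
        (∑ j ∈ Finset.Ico (i+1) m, δ ^ p ^ (k'*(j+1))) := by
      rw [hG]
      simp only
      rw [mul_pow, mul_pow, frob_neg_one_pow, ppa, frob_sum]
      have : k'*i + k' = k'*(i+1) := by ring
      rw [this]
      congr 1
      exact Finset.sum_congr rfl fun j _ => by
        rw [ppa, show k'*j + k' = k'*(j+1) by ring]
    have h2 : (∑ j ∈ Finset.Ico (i+1) m, δ ^ p ^ (k'*(j+1)))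
        = (∑ j ∈ Finset.Ico (i+2) m, δ ^ p ^ (k'*j)) + δ := by
      have hre : ∑ j ∈ Finset.Ico (i+1) m, δ ^ p ^ (k'*(j+1))
          = ∑ j ∈ Finset.Ico (i+2) (m+1), δ ^ p ^ (k'*j) := by
        rw [Finset.sum_Ico_eq_sum_range, Finset.sum_Ico_eq_sum_range]
        have : m + 1 - (i+2) = m - (i+1) := by omega
        rw [this]
        exact Finset.sum_congr rfl fun x _ => by
          congr 2
          ring
      rw [hre, Finset.sum_Ico_succ_top him, hδ]
    have h3 : G (i+1) = (-1:F)^(i+1) * b ^ p ^ (k'*(i+1)) *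
        (∑ j ∈ Finset.Ico (i+2) m, δ ^ p ^ (k'*j)) := rfl
    rw [h1, h2, h3, pow_succ]
    ring
  rw [hstep, Finset.sum_add_distrib]
  -- Σ_{i<m-1} (-G(i+1)) = G 0 - Σ_{i<m-1} G i  (using G (m-1) = 0)
  have hGm : G (m-1) = 0 := by
    rw [hG]
    simp only
    rw [show m - 1 + 1 = m by omega]
    simp
  have hsucc : ∑ i ∈ Finset.range (m-1), G (i+1)
      = (∑ i ∈ Finset.range (m-1), G i) - G 0 := by
    have h4 := Finset.sum_range_succ' G (m-1)
    have h5 := Finset.sum_range_succ G (m-1)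
    rw [show m - 1 + 1 = m by omega] at h4 h5
    rw [h5, hGm, add_zero] at h4
    linear_combination -h4
  rw [Finset.sum_neg_distrib, hsucc]
  -- second piece
  have hsecond : ∑ i ∈ Finset.range (m-1), (-1:F)^i * b ^ p ^ (k'*(i+1)) * δ
      = -δ * ((∑ i ∈ Finset.range m, (-1:F)^i * b ^ p ^ (k'*i)) - b) := by
    set H : ℕ → F := fun i => (-1:F)^i * b ^ p ^ (k'*i) with hH
    have h4 := Finset.sum_range_succ' H (m-1)
    rw [show m - 1 + 1 = m by omega] at h4
    have hH0 : H 0 = b := by rw [hH]; simp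
    have : ∑ i ∈ Finset.range (m-1), (-1:F)^i * b ^ p ^ (k'*(i+1)) * δ
        = ∑ i ∈ Finset.range (m-1), -(H (i+1)) * δ := by
      refine Finset.sum_congr rfl fun i _ => ?_
      rw [hH]
      simp only
      rw [pow_succ]
      ring
    rw [this]
    rw [hH0] at h4
    have h6 : ∑ i ∈ Finset.range (m-1), -(H (i+1)) * δ
        = -(∑ i ∈ Finset.range (m-1), H (i+1)) * δ := by
      rw [← Finset.sum_neg_distrib, Finset.sum_mul]
    rw [h6]
    have h7 : ∑ i ∈ Finset.range (m-1), H (i+1)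
        = (∑ i ∈ Finset.range m, H i) - b := by linear_combination -h4
    rw [h7]
    ring
  rw [hsecond]
  -- first piece: G 0
  have hG0 : G 0 = b * ((∑ j ∈ Finset.range m, δ ^ p ^ (k'*j)) - δ) := by
    rw [hG]
    simp only
    have h8 : ∑ j ∈ Finset.Ico 1 m, δ ^ p ^ (k'*j)
        = (∑ j ∈ Finset.range m, δ ^ p ^ (k'*j)) - δ := by
      have h9 := Finset.sum_range_succ' (fun j => δ ^ p ^ (k'*j)) (m-1)
      rw [show m - 1 + 1 = m by omega] at h9
      have h10 : ∑ j ∈ Finset.Ico 1 m, δ ^ p ^ (k'*j)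
          = ∑ j ∈ Finset.range (m-1), δ ^ p ^ (k'*(j+1)) := by
        rw [Finset.sum_Ico_eq_sum_range]
        exact Finset.sum_congr rfl fun x _ => by congr 2; ring
      rw [h10]
      simp only [Nat.mul_zero, pow_zero, pow_one] at h9
      linear_combination -h9
    rw [h8]
    simp
  rw [hG0]
  ring

open Polynomial in
lemma exists_trace_one (u v : ℕ) (hu : 0 < u) (huv : u ∣ v) (hv : 0 < v) :
    ∃ δ : F, δ ^ p ^ v = δ ∧ ∑ i ∈ Finset.range (v/u), δ ^ p ^ (u*i) = 1 := by
  have hp1 : 1 < p := (Fact.out : p.Prime).one_lt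
  set r := v / u with hr
  have hr0 : 0 < r := Nat.div_pos (Nat.le_of_dvd hv huv) hu
  have hur : u * r = v := Nat.mul_div_cancel' huv
  -- Step A: find w with nonzero partial trace
  have hA : ∃ w : F, w ^ p ^ v = w ∧ ∑ i ∈ Finset.range r, w ^ p ^ (u*i) ≠ 0 := by
    by_contra hcon
    push_neg at hcon
    classical
    set P : Polynomial F := X ^ (p ^ v) - X with hP
    set Q : Polynomial F := ∑ i ∈ Finset.range r, X ^ (p ^ (u*i)) with hQ
    have hpv1 : 1 < p ^ v := Nat.one_lt_pow (by omega) hp1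
    have hPdeg : P.natDegree = p ^ v := by
      rw [hP, natDegree_sub_eq_left_of_natDegree_lt] <;>
        simp [natDegree_X_pow, natDegree_X, hpv1]
    have hPsep : P.Separable := galois_poly_separable p (p ^ v) ⟨p ^ (v-1), by
      rw [← pow_succ']
      congr 1
      omega⟩
    have hPne : P ≠ 0 := by
      intro h
      rw [h] at hPdeg
      simp at hPdeg
      omega
    have hProots : Multiset.card P.roots = p ^ v := by
      rw [← hPdeg]
      exact splits_iff_card_roots.mp (IsAlgClosed.splits P)
    have hPnodup : P.roots.Nodup := nodup_roots hPsep
    have hPcard : P.roots.toFinset.card = p ^ v := by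
      rw [Multiset.toFinset_card_of_nodup hPnodup, hProots]
    -- Q facts
    have hQcoeff : Q.coeff (p ^ (u * (r-1))) = 1 := by
      rw [hQ, finset_sum_coeff]
      rw [Finset.sum_eq_single (r-1)]
      · simp [coeff_X_pow]
      · intro i hi hne
        rw [coeff_X_pow, if_neg]
        intro hEq
        have := Nat.pow_right_injective hp1 hEq
        exact hne (Nat.eq_of_mul_eq_mul_left hu this.symm)
      · intro h
        exact absurd (Finset.mem_range.mpr (by omega)) h
    have hQne : Q ≠ 0 := fun h => by simp [h] at hQcoeff
    have hQdeg : Q.natDegree ≤ p ^ (u * (r-1)) := by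
      refine natDegree_sum_le_of_forall_le _ _ fun i hi => ?_
      rw [natDegree_X_pow]
      exact Nat.pow_le_pow_right (by omega) (Nat.mul_le_mul_left u (by
        have := Finset.mem_range.mp hi
        omega))
    -- subset of roots
    have hsub : P.roots.toFinset ⊆ Q.roots.toFinset := by
      intro x hx
      rw [Multiset.mem_toFinset, mem_roots hPne] at hx
      have hx' : x ^ p ^ v = x := by
        have := hx
        rw [hP] at this
        simpa [IsRoot, sub_eq_zero] using this
      rw [Multiset.mem_toFinset, mem_roots hQne]
      have := hcon x hx'
      rw [hQ]
      simp only [IsRoot, eval_finset_sum, eval_pow, eval_X]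
      exact this
    have hle : p ^ v ≤ p ^ (u * (r-1)) := by
      calc p ^ v = P.roots.toFinset.card := hPcard.symm
        _ ≤ Q.roots.toFinset.card := Finset.card_le_card hsub
        _ ≤ Multiset.card Q.roots := Multiset.toFinset_card_le _
        _ ≤ Q.natDegree := Q.card_roots'
        _ ≤ p ^ (u * (r-1)) := hQdeg
    have hlt : u * (r-1) < v := by
      have h2 : u * r = u * (r - 1) + u := by
        conv_lhs => rw [← Nat.succ_pred_eq_of_pos hr0]
        rw [Nat.mul_succ]
        rfl
      omega
    exact absurd hle (not_le.mpr (Nat.pow_lt_pow_right hp1 hlt))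
  obtain ⟨w, hwfix, hwne⟩ := hA
  set s : F := ∑ i ∈ Finset.range r, w ^ p ^ (u*i) with hs
  have hsfix : s ^ p ^ u = s := by
    rw [hs, frob_sum]
    have h1 : ∀ i, (w ^ p ^ (u*i)) ^ p ^ u = w ^ p ^ (u*(i+1)) := fun i => by
      rw [ppa, show u*i + u = u*(i+1) by ring]
    rw [Finset.sum_congr rfl fun i _ => h1 i]
    have h4 := Finset.sum_range_succ' (fun i => w ^ p ^ (u*i)) r
    have h5 := Finset.sum_range_succ (fun i => w ^ p ^ (u*i)) r
    rw [h5] at h4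
    have hwr : w ^ p ^ (u*r) = w := by rw [hur]; exact hwfix
    simp only [Nat.mul_zero, pow_zero, pow_one] at h4
    rw [hwr] at h4
    linear_combination -h4
  refine ⟨w * s⁻¹, ?_, ?_⟩
  · rw [mul_pow, hwfix, frob_inv]
    have : s ^ p ^ v = s := by rw [← hur]; exact fix_mul hsfix r
    rw [this]
  · have hsinv : ∀ i : ℕ, (s⁻¹) ^ p ^ (u*i) = s⁻¹ := fun i => by
      rw [frob_inv, fix_mul hsfix i]
    have : ∀ i ∈ Finset.range r, (w * s⁻¹) ^ p ^ (u*i) = w ^ p ^ (u*i) * s⁻¹ := by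
      intro i _
      rw [mul_pow, hsinv i]
    rw [Finset.sum_congr rfl this, ← Finset.sum_mul, ← hs, mul_inv_cancel₀ hwne]

/-- shifted fixing -/
lemma fix_pow_shift {x : F} {c : ℕ} (hx : x ^ p ^ c = x) (t : ℕ) :
    (x ^ p ^ t) ^ p ^ c = x ^ p ^ t := by
  rw [ppa, add_comm, ← ppa, hx]

/-- reduce exponent mod the period (unsigned) -/
lemma fix_reduce {z : F} {ee D : ℕ} (hz : z ^ p ^ (ee*D) = z) (t : ℕ) :
    z ^ p ^ (ee*t) = z ^ p ^ (ee*(t % D)) := by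
  have hdm := Nat.div_add_mod t D
  have h1 : ee*t = (ee*D)*(t/D) + ee*(t % D) := by
    calc ee*t = ee*(D*(t/D) + t % D) := by rw [hdm]
      _ = (ee*D)*(t/D) + ee*(t % D) := by ring
  rw [h1, ← ppa, fix_mul hz]

/-- reduce exponent mod the period, signed, skew case (`z^{p^{ee D}} = -z`), odd multiplier -/
lemma skew_reduce {z : F} {ee D A : ℕ} (hz : z ^ p ^ (ee*D) = -z)
    (hA : A % 2 = 1) (hD : D % 2 = 1) (i : ℕ) :
    (-1:F)^i * z ^ p ^ (ee*(A*i)) = (-1)^(A*i % D) * z ^ p ^ (ee*(A*i % D)) := by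
  have hdm := Nat.div_add_mod (A*i) D
  have h1 : ee*(A*i) = (ee*D)*(A*i/D) + ee*(A*i % D) := by
    calc ee*(A*i) = ee*(D*(A*i/D) + A*i % D) := by rw [hdm]
      _ = (ee*D)*(A*i/D) + ee*(A*i % D) := by ring
  rw [h1, ← ppa, skew_mul hz, mul_pow, frob_neg_one_pow, ← mul_assoc, ← pow_add]
  congr 1
  apply neg_one_pow_congr
  have e1 : (D*(A*i/D)) % 2 = (A*i/D) % 2 := by
    rw [Nat.mul_mod, hD, one_mul, Nat.mod_mod_of_dvd _ dvd_rfl]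
  have e2 : (A*i) % 2 = i % 2 := by
    rw [Nat.mul_mod, hA, one_mul, Nat.mod_mod_of_dvd _ dvd_rfl]
  omega

/-- reduce exponent mod the period, signed, fixed case with even period -/
lemma fix_reduce_even {b : F} {dd m' : ℕ} (hb : b ^ p ^ (dd*m') = b)
    (hm : m' % 2 = 0) (t : ℕ) :
    (-1:F)^t * b ^ p ^ (dd*t) = (-1)^(t % m') * b ^ p ^ (dd*(t % m')) := by
  have hdm := Nat.div_add_mod t m'
  have h1 : dd*t = (dd*m')*(t/m') + dd*(t % m') := by
    calc dd*t = dd*(m'*(t/m') + t % m') := by rw [hdm]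
      _ = (dd*m')*(t/m') + dd*(t % m') := by ring
  rw [h1, ← ppa, fix_mul hb]
  congr 1
  apply neg_one_pow_congr
  have e1 : (m'*(t/m')) % 2 = 0 := by
    rw [Nat.mul_mod, hm, zero_mul, Nat.zero_mod]
  omega

/-- Smap is additive -/
lemma smap_add (u v : ℕ) (x y : F) : Smap p u v (x + y) = Smap p u v x + Smap p u v y := by
  unfold Smap
  rw [← Finset.sum_add_distrib]
  refine Finset.sum_congr rfl fun i _ => ?_
  rw [frob_add]
  ring

lemma smap_frob (u v t : ℕ) (x : F) : Smap p u v (x ^ p ^ t) = (Smap p u v x) ^ p ^ t := by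
  unfold Smap
  rw [frob_sum]
  refine Finset.sum_congr rfl fun i _ => ?_
  rw [mul_pow, frob_neg_one_pow, ppa, ppa, add_comm]

lemma smap_apply_sum (u₁ v₁ u₂ v₂ : ℕ) (x : F) :
    Smap p u₁ v₁ (Smap p u₂ v₂ x)
      = ∑ i ∈ Finset.range (v₁/u₁), ∑ j ∈ Finset.range (v₂/u₂),
          ((-1:F)^i * (-1)^j) * x ^ p ^ (u₁*i + u₂*j) := by
  unfold Smap
  refine Finset.sum_congr rfl fun i _ => ?_
  rw [frob_sum, Finset.mul_sum]
  refine Finset.sum_congr rfl fun j _ => ?_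
  rw [mul_pow, frob_neg_one_pow, ppa, show u₂*j + u₁*i = u₁*i + u₂*j from by ring]
  ring

lemma smap_swap (u₁ v₁ u₂ v₂ : ℕ) (x : F) :
    Smap p u₁ v₁ (Smap p u₂ v₂ x) = Smap p u₂ v₂ (Smap p u₁ v₁ x) := by
  rw [smap_apply_sum, smap_apply_sum, Finset.sum_comm]
  refine Finset.sum_congr rfl fun j _ => Finset.sum_congr rfl fun i _ => ?_
  rw [show u₁*i + u₂*j = u₂*j + u₁*i from by ring]
  ring

/-- all the arithmetic facts -/
lemma nt_facts {n k l d e L : ℕ} (hn : 0 < n) (hk : 0 < k) (hl : 0 < l)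
    (hlk : l ∣ k) (hkl : Odd (k / l))
    (hd : d = Nat.gcd n k) (he : e = Nat.gcd n l) (hL : L = Nat.lcm d l)
    (hnd : Even (n / d)) :
    0 < d ∧ 0 < e ∧ e ∣ d ∧ d ∣ n ∧ d ∣ k ∧ e ∣ l ∧
    Odd (k/d) ∧ Odd (l/e) ∧ Odd (d/e) ∧
    Nat.Coprime (k/d) (n/d) ∧ Nat.Coprime (l/e) (d/e) ∧
    L ∣ k ∧ d ∣ L ∧ k/l = (k/L) * (d/e) ∧ L = d * (l/e) ∧ L = (d/e) * l ∧
    2 ≤ n/d := by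
  have hd0 : 0 < d := hd ▸ Nat.gcd_pos_of_pos_left k hn
  have he0 : 0 < e := he ▸ Nat.gcd_pos_of_pos_left l hn
  have hdn : d ∣ n := hd ▸ Nat.gcd_dvd_left n k
  have hdk : d ∣ k := hd ▸ Nat.gcd_dvd_right n k
  have hen : e ∣ n := he ▸ Nat.gcd_dvd_left n l
  have hel : e ∣ l := he ▸ Nat.gcd_dvd_right n l
  have hed : e ∣ d := hd ▸ Nat.dvd_gcd hen (hel.trans hlk)
  have hgdl : Nat.gcd d l = e := by
    apply Nat.dvd_antisymm
    · rw [he]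
      exact Nat.dvd_gcd ((Nat.gcd_dvd_left d l).trans hdn) (Nat.gcd_dvd_right d l)
    · exact Nat.dvd_gcd hed hel
  have hnd' : d * (n/d) = n := Nat.mul_div_cancel' hdn
  have hde' : e * (d/e) = d := Nat.mul_div_cancel' hed
  have hle' : e * (l/e) = l := Nat.mul_div_cancel' hel
  have hkd' : d * (k/d) = k := Nat.mul_div_cancel' hdk
  have hkl' : l * (k/l) = k := Nat.mul_div_cancel' hlk
  have h2dn : 2*d ∣ n := by
    obtain ⟨t, ht⟩ := hnd
    exact ⟨t, by rw [← hnd', ht]; ring⟩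
  have h2en : 2*e ∣ n := by
    obtain ⟨t, ht⟩ := hnd
    refine ⟨(d/e) * t, ?_⟩
    calc n = d * (n/d) := hnd'.symm
      _ = (e * (d/e)) * (t+t) := by rw [ht, hde']
      _ = 2*e*((d/e)*t) := by ring
  have hm2 : 2 ≤ n/d := by
    have h1 : 0 < n/d := Nat.div_pos (Nat.le_of_dvd hn hdn) hd0
    obtain ⟨t, ht⟩ := hnd
    omega
  have hκ : Odd (k/d) := by
    rcases Nat.even_or_odd (k/d) with hev | h
    · exfalso
      obtain ⟨s, hs⟩ := hev
      have h2dk : 2*d ∣ k := ⟨s, by rw [← hkd', hs]; ring⟩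
      have : 2*d ∣ d := by
        rw [hd] at h2dk ⊢
        rw [hd] at h2dn
        exact Nat.dvd_gcd h2dn h2dk
      have := Nat.le_of_dvd hd0 this
      omega
    · exact h
  have hA : Odd (l/e) := by
    rcases Nat.even_or_odd (l/e) with hev | h
    · exfalso
      obtain ⟨s, hs⟩ := hev
      have h2el : 2*e ∣ l := ⟨s, by rw [← hle', hs]; ring⟩
      have : 2*e ∣ e := by
        rw [he] at h2el ⊢
        rw [he] at h2en
        exact Nat.dvd_gcd h2en h2el
      have := Nat.le_of_dvd he0 this
      omega
    · exact h
  have hD : Odd (d/e) := by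
    rcases Nat.even_or_odd (d/e) with hev | h
    · exfalso
      obtain ⟨s, hs⟩ := hev
      have h2ed : 2*e ∣ d := ⟨s, by rw [← hde', hs]; ring⟩
      obtain ⟨c, hc⟩ := h2ed.trans hdk
      have hkey : e * ((l/e) * (k/l)) = e * (2 * c) := by
        rw [← mul_assoc, hle', hkl', hc]; ring
      have hodd : Odd ((l/e) * (k/l)) := hA.mul hkl
      have := Nat.eq_of_mul_eq_mul_left he0 hkey
      obtain ⟨w, hw⟩ := hodd
      omega
    · exact h
  have hcop1 : Nat.Coprime (k/d) (n/d) := by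
    have h := Nat.coprime_div_gcd_div_gcd (m := n) (n := k) (by rw [← hd]; exact hd0)
    rw [← hd] at h
    exact h.symm
  have hcop2 : Nat.Coprime (l/e) (d/e) := by
    have h := Nat.coprime_div_gcd_div_gcd (m := d) (n := l) (by rw [hgdl]; exact he0)
    rw [hgdl] at h
    exact h.symm
  have hLk : L ∣ k := hL ▸ Nat.lcm_dvd hdk hlk
  have hdL : d ∣ L := hL ▸ Nat.dvd_lcm_left d l
  have hlL : l ∣ L := hL ▸ Nat.dvd_lcm_right d l
  have hL1 : L = d * (l/e) := by
    rw [hL, Nat.lcm, hgdl, Nat.mul_div_assoc d hel]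
  have hL2 : L = (d/e) * l := by
    rw [hL, Nat.lcm, hgdl, mul_comm d l, Nat.mul_div_assoc l hed, mul_comm]
  have hklL : k/l = (k/L) * (d/e) := by
    have hL0 : 0 < L := Nat.pos_of_dvd_of_pos hLk hk
    obtain ⟨K₁, hK₁⟩ := hLk
    have hkLK : k / L = K₁ := by rw [hK₁, Nat.mul_div_cancel_left _ hL0]
    have h1 : K₁ * (d/e) * l = k := by rw [hK₁, hL2]; ring
    rw [hkLK]
    conv_lhs => rw [← h1]
    rw [Nat.mul_div_cancel _ hl]
  exact ⟨hd0, he0, hed, hdn, hdk, hel, hκ, hA, hD, hcop1, hcop2, hLk, hdL, hklL, hL1, hL2, hm2⟩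

lemma forward_dir {n k l d e L : ℕ} (hn : 0 < n) (hk : 0 < k) (hl : 0 < l)
    (hlk : l ∣ k) (hkl : Odd (k / l))
    (hd : d = Nat.gcd n k) (he : e = Nat.gcd n l) (hL : L = Nat.lcm d l)
    (hnd : Even (n / d)) (x a : F) (hx : x ^ p ^ n = x) (hax : Smap p l k x = a) :
    Tmap p e (2*e) (Smap p d n a) = 0 := by
  obtain ⟨hd0, he0, hed, hdn, hdk, hel, hκ, hA, hD, hcop1, hcop2, hLk, hdL, hklL, hL1, hL2, hm2⟩ :=
    nt_facts hn hk hl hlk hkl hd he hL hnd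
  have hdm : d * (n/d) = n := Nat.mul_div_cancel' hdn
  have hde' : e * (d/e) = e * (d/e) := rfl
  have hdee : e * (d/e) = d := Nat.mul_div_cancel' hed
  have hlee : e * (l/e) = l := Nat.mul_div_cancel' hel
  have hD0 : 0 < d/e := Nat.div_pos (Nat.le_of_dvd hd0 hed) he0
  -- z and its skew property
  have hzskew : (Smap p d n x) ^ p ^ d = -(Smap p d n x) := by
    have ht := telescope x d (n/d)
    rw [hdm, Even.neg_one_pow hnd, one_mul, hx] at ht
    unfold Smap
    linear_combination ht
  set z := Smap p d n x with hzdef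
  have hcomm : Smap p d n a = Smap p l k z := by rw [← hax, smap_swap]
  -- periodicity
  have hper : ∀ i, (-1:F)^(i + d/e) * z ^ p ^ (l*(i + d/e)) = (-1)^i * z ^ p ^ (l*i) := by
    intro i
    have hld : l*(d/e) = d*(l/e) := by
      calc l*(d/e) = (e*(l/e))*(d/e) := by rw [hlee]
        _ = (e*(d/e))*(l/e) := by ring
        _ = d*(l/e) := by rw [hdee]
    have h1 : l*(i + d/e) = d*(l/e) + l*i := by rw [Nat.mul_add, hld]; ring
    rw [h1, ← ppa, skew_mul hzskew (l/e), mul_pow, frob_neg_one_pow, pow_add,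
      Odd.neg_one_pow hD, Odd.neg_one_pow hA]
    ring
  -- reduction 1 : periodic sum
  have hred1 : Smap p l k z = (k/L) • (∑ i ∈ Finset.range (d/e), (-1:F)^i * z ^ p ^ (l*i)) := by
    show ∑ i ∈ Finset.range (k/l), (-1:F)^i * z ^ p ^ (l*i) = _
    rw [hklL]
    exact sum_period _ _ _ hper
  -- reduction 2 : mod d/e
  have hred2 : ∑ i ∈ Finset.range (d/e), (-1:F)^i * z ^ p ^ (l*i)
      = ∑ j ∈ Finset.range (d/e), (-1:F)^j * z ^ p ^ (e*j) := by
    have hz' : z ^ p ^ (e*(d/e)) = -z := by rw [hdee]; exact hzskew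
    set g : ℕ → F := fun j => (-1:F)^j * z ^ p ^ (e*j) with hg
    have hstep : ∀ i ∈ Finset.range (d/e), (-1:F)^i * z ^ p ^ (l*i)
        = g ((l/e)*i % (d/e)) := by
      intro i _
      have h1 : l*i = e*((l/e)*i) := by rw [← mul_assoc, hlee]
      rw [h1, hg]
      exact skew_reduce hz' (Nat.odd_iff.mp hA) (Nat.odd_iff.mp hD) i
    rw [Finset.sum_congr rfl hstep]
    exact sum_bij_mod g _ _ hcop2 hD0
  -- telescope for the e-sum
  have htel2 : (∑ j ∈ Finset.range (d/e), (-1:F)^j * z ^ p ^ (e*j)) ^ p ^ e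
      = -(∑ j ∈ Finset.range (d/e), (-1:F)^j * z ^ p ^ (e*j)) := by
    have ht := telescope z e (d/e)
    rw [hdee, hzskew, Odd.neg_one_pow hD] at ht
    linear_combination ht
  -- assemble
  unfold Tmap
  rw [Nat.mul_div_cancel 2 he0]
  rw [Finset.sum_range_succ, Finset.sum_range_one]
  rw [Nat.mul_zero, pow_zero, pow_one, Nat.mul_one]
  rw [hcomm, hred1, hred2, nsmul_eq_mul, mul_pow, frob_natCast, htel2]
  ring

lemma frob_two (t : ℕ) : (2:F) ^ p ^ t = 2 := by
  have := frob_natCast (p := p) 2 t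
  simpa using this

lemma smap_fix {x : F} {c : ℕ} (hx : x ^ p ^ c = x) (u v : ℕ) :
    (Smap p u v x) ^ p ^ c = Smap p u v x := by
  unfold Smap
  rw [frob_sum]
  refine Finset.sum_congr rfl fun i _ => ?_
  rw [mul_pow, frob_neg_one_pow, fix_pow_shift hx]

lemma t2e2d {d e : ℕ} (he0 : 0 < e) (hed : e ∣ d) (hD : Odd (d/e))
    (δ₁ : F) (hδ₁d : δ₁ ^ p ^ d = δ₁) :
    Tmap p (2*e) (2*d) δ₁ = ∑ j ∈ Finset.range (d/e), δ₁ ^ p ^ (e*j) := by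
  have hD0 : 0 < d/e := by
    obtain ⟨t, ht⟩ := hD
    omega
  have hdee : e * (d/e) = d := Nat.mul_div_cancel' hed
  have hδ₁' : δ₁ ^ p ^ (e*(d/e)) = δ₁ := by rw [hdee]; exact hδ₁d
  have hcop2' : Nat.Coprime 2 (d/e) := by
    rw [Nat.prime_two.coprime_iff_not_dvd]
    intro hdvd
    obtain ⟨c, hc⟩ := hdvd
    have := Nat.odd_iff.mp hD
    omega
  set gU : ℕ → F := fun j => δ₁ ^ p ^ (e*j) with hgU
  unfold Tmap
  rw [Nat.mul_div_mul_left d e two_pos]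
  rw [show ∑ i ∈ Finset.range (d/e), δ₁ ^ p ^ (2*e*i)
    = ∑ i ∈ Finset.range (d/e), gU (2*i % (d/e)) from Finset.sum_congr rfl fun i _ => by
      rw [show 2*e*i = e*(2*i) by ring, hgU]
      exact fix_reduce hδ₁' (2*i)]
  rw [sum_bij_mod gU _ _ hcop2' hD0]

lemma construct {n k l d e L : ℕ} (hp2 : p ≠ 2) (hn : 0 < n) (hk : 0 < k) (hl : 0 < l)
    (hlk : l ∣ k) (hkl : Odd (k / l))
    (hd : d = Nat.gcd n k) (he : e = Nat.gcd n l) (hL : L = Nat.lcm d l)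
    (hnd : Even (n / d)) (hpk : ¬ p ∣ k / L)
    (a : F) (ha : a ^ p ^ n = a)
    (H : Tmap p e (2*e) (Smap p d n a) = 0)
    (δ : F) (hδn : δ ^ p ^ n = δ) (hδ1 : Tmap p d n δ = 1)
    (δ₁ : F) (hδ₁d : δ₁ ^ p ^ d = δ₁) (hδ₁1 : Tmap p (2*e) (2*d) δ₁ = 1)
    (y₀ : F) (hy₀ : y₀ = ∑ i ∈ Finset.range (n/d - 1), ∑ j ∈ Finset.Ico (i+1) (n/d),
        (-1:F)^i * δ ^ p ^ (k*j) * (Tmap p l (2*l) a) ^ p ^ (k*i))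
    (x₀ : F) (hx₀ : x₀ = y₀ + (((2 * (k / L) : ℕ) : F))⁻¹ *
        Smap p d (2*d) ((a - Smap p l k y₀) * δ₁)) :
    x₀ ^ p ^ n = x₀ ∧ Smap p l k x₀ = a := by
  obtain ⟨hd0, he0, hed, hdn, hdk, hel, hκ, hA, hD, hcop1, hcop2, hLk, hdL, hklL, hL1, hL2, hm2⟩ :=
    nt_facts hn hk hl hlk hkl hd he hL hnd
  have hdm : d * (n/d) = n := Nat.mul_div_cancel' hdn
  have hdee : e * (d/e) = d := Nat.mul_div_cancel' hed
  have hlee : e * (l/e) = l := Nat.mul_div_cancel' hel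
  have hkd' : d * (k/d) = k := Nat.mul_div_cancel' hdk
  have hkl' : l * (k/l) = k := Nat.mul_div_cancel' hlk
  have hD0 : 0 < d/e := Nat.div_pos (Nat.le_of_dvd hd0 hed) he0
  have hm0 : 0 < n/d := by omega
  have h2F : (2:F) ≠ 0 := by
    intro hc
    have h2n : ((2:ℕ) : F) = 0 := by exact_mod_cast hc
    have := (CharP.cast_eq_zero_iff F p 2).mp h2n
    exact hp2 ((Nat.prime_dvd_prime_iff_eq Fact.out Nat.prime_two).mp this)
  -- b
  set b : F := Tmap p l (2*l) a with hbdef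
  have hb : b = a + a ^ p ^ l := by
    rw [hbdef]
    unfold Tmap
    rw [Nat.mul_div_cancel 2 hl, Finset.sum_range_succ, Finset.sum_range_one,
      Nat.mul_zero, pow_zero, pow_one, Nat.mul_one]
  have hbn : b ^ p ^ n = b := by
    rw [hb, frob_add, ha, fix_pow_shift ha l]
  -- c
  have hcskew : (Smap p d n a) ^ p ^ d = -(Smap p d n a) := by
    have ht := telescope a d (n/d)
    rw [hdm, Even.neg_one_pow hnd, one_mul, ha] at ht
    unfold Smap
    linear_combination ht
  have hH' : (Smap p d n a) + (Smap p d n a) ^ p ^ e = 0 := by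
    unfold Tmap at H
    rw [Nat.mul_div_cancel 2 he0, Finset.sum_range_succ, Finset.sum_range_one,
      Nat.mul_zero, pow_zero, pow_one, Nat.mul_one] at H
    exact H
  have hce : (Smap p d n a) ^ p ^ e = -(Smap p d n a) := by linear_combination hH'
  have hcl : (Smap p d n a) ^ p ^ l = -(Smap p d n a) := by
    have h1 := skew_mul hce (l/e)
    rw [hlee, Odd.neg_one_pow hA, neg_one_mul] at h1
    exact h1
  have hSb : Smap p d n b = 0 := by
    rw [hb, smap_add, smap_frob, hcl]
    ring
  -- the two reindexed sums
  have hT1 : ∑ j ∈ Finset.range (n/d), δ ^ p ^ (k*j) = 1 := by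
    have hδ' : δ ^ p ^ (d*(n/d)) = δ := by rw [hdm]; exact hδn
    set gT : ℕ → F := fun j => δ ^ p ^ (d*j) with hgT
    have hstep : ∀ j ∈ Finset.range (n/d), δ ^ p ^ (k*j) = gT ((k/d)*j % (n/d)) := by
      intro j _
      have h1 : k*j = d*((k/d)*j) := by rw [← mul_assoc, hkd']
      rw [h1, hgT]
      exact fix_reduce hδ' ((k/d)*j)
    rw [Finset.sum_congr rfl hstep, sum_bij_mod gT _ _ hcop1 hm0]
    rw [← hδ1]
    rfl
  have hS1 : ∑ i ∈ Finset.range (n/d), (-1:F)^i * b ^ p ^ (k*i) = 0 := by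
    have hb' : b ^ p ^ (d*(n/d)) = b := by rw [hdm]; exact hbn
    set gS : ℕ → F := fun j => (-1:F)^j * b ^ p ^ (d*j) with hgS
    have hstep : ∀ i ∈ Finset.range (n/d), (-1:F)^i * b ^ p ^ (k*i)
        = gS ((k/d)*i % (n/d)) := by
      intro i _
      have h1 : k*i = d*((k/d)*i) := by rw [← mul_assoc, hkd']
      have h2 : (-1:F)^i = (-1)^((k/d)*i) := by
        apply neg_one_pow_congr
        rw [Nat.mul_mod, Nat.odd_iff.mp hκ, one_mul, Nat.mod_mod_of_dvd _ dvd_rfl]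
      rw [h1, h2, hgS]
      exact fix_reduce_even hb' (by
        obtain ⟨t, ht⟩ := hnd
        omega) ((k/d)*i)
    rw [Finset.sum_congr rfl hstep, sum_bij_mod gS _ _ hcop1 hm0]
    rw [← hSb]
    rfl
  -- y₀ + y₀^{p^k} = b
  have hδkm : δ ^ p ^ (k*(n/d)) = δ := by
    have h1 : k*(n/d) = n*(k/d) := by
      calc k*(n/d) = (d*(k/d))*(n/d) := by rw [hkd']
        _ = (d*(n/d))*(k/d) := by ring
        _ = n*(k/d) := by rw [hdm]
    rw [h1]
    exact fix_mul hδn (k/d)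
  have hy : y₀ + y₀ ^ p ^ k = b := by
    rw [hy₀, h90 (n/d) k (by omega) δ b hδkm, hT1, hS1]
    ring
  have hy₀n : y₀ ^ p ^ n = y₀ := by
    rw [hy₀, frob_sum]
    refine Finset.sum_congr rfl fun i _ => ?_
    rw [frob_sum]
    refine Finset.sum_congr rfl fun j _ => ?_
    rw [mul_pow, mul_pow, frob_neg_one_pow, fix_pow_shift hδn, fix_pow_shift hbn]
  -- u
  set u : F := a - Smap p l k y₀ with hu
  have hSS : Smap p l k y₀ + (Smap p l k y₀) ^ p ^ l = b := by
    have ht := telescope y₀ l (k/l)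
    rw [hkl', Odd.neg_one_pow hkl] at ht
    unfold Smap
    rw [← hy]
    linear_combination ht
  have hul : u ^ p ^ l = -u := by
    rw [hu, frob_sub]
    linear_combination -hSS - hb
  have hun : u ^ p ^ n = u := by
    rw [hu, frob_sub, ha, smap_fix hy₀n]
  have hue : u ^ p ^ e = -u := by
    have husq : (u*u) ^ p ^ l = u*u := by rw [mul_pow, hul]; ring
    have husqn : (u*u) ^ p ^ n = u*u := by rw [mul_pow, hun]
    have hgcd : (u*u) ^ p ^ e = u*u := by
      have := fix_gcd n l husqn husq
      rwa [← he] at this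
    have h2 : u ^ p ^ e * u ^ p ^ e = u * u := by rw [← mul_pow]; exact hgcd
    rcases mul_self_eq_mul_self_iff.mp h2 with h | h
    · have h3 := fix_mul h (l/e)
      rw [hlee, hul] at h3
      have hu0 : u = 0 := by
        have h4 : (2:F) * u = 0 := by linear_combination -h3
        rcases mul_eq_zero.mp h4 with h5 | h5
        · exact absurd h5 h2F
        · exact h5
      rw [hu0] at h ⊢
      simpa using h
    · exact h
  have hud : u ^ p ^ d = -u := by
    have h1 := skew_mul hue (d/e)
    rw [hdee, Odd.neg_one_pow hD, neg_one_mul] at h1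
    exact h1
  have hδ₁n : δ₁ ^ p ^ n = δ₁ := by
    have := fix_mul hδ₁d (n/d)
    rwa [hdm] at this
  have hδ₁' : δ₁ ^ p ^ (e*(d/e)) = δ₁ := by rw [hdee]; exact hδ₁d
  set gU : ℕ → F := fun j => δ₁ ^ p ^ (e*j) with hgU
  have hδ₁sum : ∑ j ∈ Finset.range (d/e), gU j = 1 := by
    rw [← t2e2d he0 hed hD δ₁ hδ₁d]
    exact hδ₁1
  have hδ₁k : ∑ i ∈ Finset.range (k/l), δ₁ ^ p ^ (l*i) = ((k/L : ℕ) : F) := by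
    have hld : l*(d/e) = d*(l/e) := by
      calc l*(d/e) = (e*(l/e))*(d/e) := by rw [hlee]
        _ = (e*(d/e))*(l/e) := by ring
        _ = d*(l/e) := by rw [hdee]
    have hδ₁L : δ₁ ^ p ^ (l*(d/e)) = δ₁ := by
      rw [hld]
      exact fix_mul hδ₁d (l/e)
    have hper : ∀ i, δ₁ ^ p ^ (l*(i + d/e)) = δ₁ ^ p ^ (l*i) := by
      intro i
      have h1 : l*(i + d/e) = l*(d/e) + l*i := by ring
      rw [h1, ← ppa, hδ₁L]
    rw [hklL, sum_period _ _ _ hper]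
    have hinner : ∑ i ∈ Finset.range (d/e), δ₁ ^ p ^ (l*i) = 1 := by
      rw [show ∑ i ∈ Finset.range (d/e), δ₁ ^ p ^ (l*i)
        = ∑ i ∈ Finset.range (d/e), gU ((l/e)*i % (d/e)) from Finset.sum_congr rfl fun i _ => by
          rw [show l*i = e*((l/e)*i) from by rw [← mul_assoc, hlee], hgU]
          exact fix_reduce hδ₁' ((l/e)*i)]
      rw [sum_bij_mod gU _ _ hcop2 hD0]
      exact hδ₁sum
    rw [hinner, nsmul_eq_mul, mul_one]
  -- the correction term
  have hW : Smap p d (2*d) (u * δ₁) = 2*(u*δ₁) := by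
    unfold Smap
    rw [Nat.mul_div_cancel 2 hd0, Finset.sum_range_succ, Finset.sum_range_one]
    simp only [Nat.mul_zero, Nat.mul_one, pow_zero, pow_one, one_mul, neg_mul]
    rw [mul_pow, hud, hδ₁d]
    ring
  have hC : ((2 * (k / L) : ℕ) : F) ≠ 0 := by
    intro hc
    have := (CharP.cast_eq_zero_iff F p _).mp hc
    rcases (Nat.Prime.dvd_mul Fact.out).mp this with h | h
    · exact hp2 ((Nat.prime_dvd_prime_iff_eq Fact.out Nat.prime_two).mp h)
    · exact hpk h
  set C : F := (((2 * (k / L) : ℕ) : F))⁻¹ with hCdef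
  have hCfix : ∀ t : ℕ, C ^ p ^ t = C := fun t => by
    rw [hCdef, frob_inv, frob_natCast]
  have hT2 : Smap p l k (C * (2*(u*δ₁))) = u := by
    unfold Smap
    have hterm : ∀ i ∈ Finset.range (k/l), (-1:F)^i * (C * (2*(u*δ₁))) ^ p ^ (l*i)
        = (C*(2*u)) * δ₁ ^ p ^ (l*i) := by
      intro i _
      have hsq : (-1:F)^i * (-1)^i = 1 := by
        rw [← pow_add]
        exact Even.neg_one_pow ⟨i, rfl⟩
      rw [mul_pow, mul_pow, mul_pow, hCfix, frob_two, skew_mul hul i]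
      linear_combination (C*(2*(u * δ₁ ^ p ^ (l*i)))) * hsq
    rw [Finset.sum_congr rfl hterm, ← Finset.mul_sum, hδ₁k, hCdef]
    rw [show ((2 * (k / L) : ℕ) : F) = 2 * ((k/L : ℕ) : F) from by push_cast; ring] at hC ⊢
    have hC' : ((k/L : ℕ) : F) ≠ 0 := right_ne_zero_of_mul hC
    field_simp
  refine ⟨?_, ?_⟩
  · rw [hx₀, frob_add, hy₀n, mul_pow, hCfix]
    congr 1
    congr 1
    exact smap_fix (by rw [mul_pow, hun, hδ₁n]) d (2*d)
  · rw [hx₀, smap_add, hW, hT2, hu]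
    ring

end Stmt18Aux

theorem stmt18 (p : ℕ) [Fact p.Prime] (hp2 : p ≠ 2) (n k l : ℕ)
    (hn : 0 < n) (hk : 0 < k) (hl : 0 < l)
    (hlk : l ∣ k) (hkl : Odd (k / l)) (d e L : ℕ)
    (hd : d = Nat.gcd n k) (he : e = Nat.gcd n l) (hL : L = Nat.lcm d l)
    (hnd : Even (n / d)) (hpk : ¬ p ∣ k / L)
    (a : AlgebraicClosure (ZMod p)) (ha : a ∈ Ffield p n) :
    ((∃ x ∈ Ffield p n, Smap p l k x = a) ↔ Tmap p e (2 * e) (Smap p d n a) = 0) ∧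
    (Tmap p e (2 * e) (Smap p d n a) = 0 →
      ∀ δ ∈ Ffield p n, Tmap p d n δ = 1 →
      ∀ δ₁ ∈ Ffield p d, Tmap p (2 * e) (2 * d) δ₁ = 1 →
      ∀ y₀, y₀ = ∑ i ∈ Finset.range (n / d - 1), ∑ j ∈ Finset.Ico (i + 1) (n / d),
          (-1 : AlgebraicClosure (ZMod p)) ^ i * δ ^ p ^ (k * j) *
            (Tmap p l (2 * l) a) ^ p ^ (k * i) →
      ∀ x₀, x₀ = y₀ + (((2 * (k / L) : ℕ) : AlgebraicClosure (ZMod p)))⁻¹ *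
          Smap p d (2 * d) ((a - Smap p l k y₀) * δ₁) →
        x₀ ∈ Ffield p n ∧ Smap p l k x₀ = a) := by
  have ha' : a ^ p ^ n = a := ha
  obtain ⟨hd0, he0, hed, hdn, hdk, hel, hκ, hA, hD, hcop1, hcop2, hLk, hdL, hklL, hL1, hL2, hm2⟩ :=
    Stmt18Aux.nt_facts hn hk hl hlk hkl hd he hL hnd
  constructor
  · constructor
    · rintro ⟨x, hx, hax⟩
      exact Stmt18Aux.forward_dir hn hk hl hlk hkl hd he hL hnd x a hx hax
    · intro H
      obtain ⟨δ, hδn, hδ1⟩ := Stmt18Aux.exists_trace_one (p := p) d n hd0 hdn hn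
      obtain ⟨δ₁, hδ₁d, hδ₁1⟩ := Stmt18Aux.exists_trace_one (p := p) e d he0 hed hd0
      have hδ1' : Tmap p d n δ = 1 := hδ1
      have hδ₁1' : Tmap p (2*e) (2*d) δ₁ = 1 := by
        rw [Stmt18Aux.t2e2d he0 hed hD δ₁ hδ₁d]
        exact hδ₁1
      obtain ⟨hmem, heq⟩ := Stmt18Aux.construct hp2 hn hk hl hlk hkl hd he hL hnd hpk a ha' H
        δ hδn hδ1' δ₁ hδ₁d hδ₁1' _ rfl _ rfl
      exact ⟨_, hmem, heq⟩
  · intro H δ hδF hδ1 δ₁ hδ₁F hδ₁1 y₀ hy₀ x₀ hx₀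
    exact Stmt18Aux.construct hp2 hn hk hl hlk hkl hd he hL hnd hpk a ha' H
      δ hδF hδ1 δ₁ hδ₁F hδ₁1 y₀ hy₀ x₀ hx₀
end

section
/- Let p be an odd prime, let n, k, l be positive integers with l | k and k/l odd, and set d = gcd(n,k). Suppose n/d is odd. Then for every a ∈ 𝔽_{p^n}, the equation S_l^k(X) = a has a unique solution in 𝔽_{p^n}, given explicitly by x₀ = (1/2)·T_l^{2l}(S_k^{lcm(n,k)}(a)); in particular, S_l^k is a bijection of 𝔽_{p^n}. -/
open Finset

section Aux

variable {p : ℕ} [Fact p.Prime]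

lemma smap_pow (u v j : ℕ) (x : AlgebraicClosure (ZMod p)) :
    (Smap p u v x) ^ p ^ j = Smap p u v (x ^ p ^ j) := by
  rw [← iterateFrobenius_def p j (Smap p u v x)]
  unfold Smap
  rw [map_sum]
  refine Finset.sum_congr rfl fun i _ => ?_
  rw [map_mul, map_pow, map_pow, map_neg, map_one, iterateFrobenius_def]

lemma tmap_pow (u v j : ℕ) (x : AlgebraicClosure (ZMod p)) :
    (Tmap p u v x) ^ p ^ j = Tmap p u v (x ^ p ^ j) := by
  rw [← iterateFrobenius_def p j (Tmap p u v x)]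
  unfold Tmap
  rw [map_sum]
  refine Finset.sum_congr rfl fun i _ => ?_
  rw [map_pow, iterateFrobenius_def]

lemma smap_add_s19 (u v : ℕ) (x y : AlgebraicClosure (ZMod p)) :
    Smap p u v (x + y) = Smap p u v x + Smap p u v y := by
  unfold Smap
  rw [← Finset.sum_add_distrib]
  refine Finset.sum_congr rfl fun i _ => ?_
  rw [add_pow_char_pow, mul_add]

lemma two_inv_pow (j : ℕ) : ((2 : AlgebraicClosure (ZMod p))⁻¹) ^ p ^ j
    = (2 : AlgebraicClosure (ZMod p))⁻¹ := by
  rw [← iterateFrobenius_def p j, map_inv₀, map_ofNat]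

lemma smap_half (u v : ℕ) (x : AlgebraicClosure (ZMod p)) :
    Smap p u v ((2 : AlgebraicClosure (ZMod p))⁻¹ * x)
      = (2 : AlgebraicClosure (ZMod p))⁻¹ * Smap p u v x := by
  unfold Smap
  rw [Finset.mul_sum]
  refine Finset.sum_congr rfl fun i _ => ?_
  rw [mul_pow, two_inv_pow]
  ring

lemma alt_telescope {R : Type*} [CommRing R] (m : ℕ) (g : ℕ → R) :
    ∑ i ∈ Finset.range m, -(g (i + 1)) + ∑ i ∈ Finset.range m, g i = g 0 - g m := by
  have h2 := Finset.sum_range_succ' g m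
  have h3 := Finset.sum_range_succ g m
  rw [Finset.sum_neg_distrib]
  linear_combination h2 - h3

lemma telescope (u v : ℕ) (huv : u ∣ v) (hodd : Odd (v / u))
    (x : AlgebraicClosure (ZMod p)) :
    (Smap p u v x) ^ p ^ u + Smap p u v x = x ^ p ^ v + x := by
  have hv : u * (v / u) = v := Nat.mul_div_cancel' huv
  rw [smap_pow]
  have h1 : Smap p u v (x ^ p ^ u) = ∑ i ∈ Finset.range (v / u),
      -(((-1 : AlgebraicClosure (ZMod p)) ^ (i + 1)) * x ^ p ^ (u * (i + 1))) := by
    unfold Smap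
    refine Finset.sum_congr rfl fun i _ => ?_
    rw [← pow_mul, ← pow_add]
    have he : u * (i + 1) = u + u * i := by ring
    rw [he, pow_succ]
    ring
  have h4 : Smap p u v x = ∑ i ∈ Finset.range (v / u),
      ((-1 : AlgebraicClosure (ZMod p)) ^ i) * x ^ p ^ (u * i) := rfl
  rw [h1, h4,
    alt_telescope (v / u) (fun i => ((-1 : AlgebraicClosure (ZMod p)) ^ i) * x ^ p ^ (u * i))]
  simp only [pow_zero, mul_zero, one_mul, pow_one, hv, Odd.neg_one_pow hodd]
  ring

lemma ffield_pow {m j : ℕ} (hmj : m ∣ j) {a : AlgebraicClosure (ZMod p)}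
    (ha : a ∈ Ffield p m) : a ^ p ^ j = a := by
  obtain ⟨t, rfl⟩ := hmj
  induction t with
  | zero => simp
  | succ t ih =>
      have : m * (t + 1) = m * t + m := by ring
      rw [this, pow_add, pow_mul, ih]
      exact ha

lemma tmap_two (u : ℕ) (hu : 0 < u) (x : AlgebraicClosure (ZMod p)) :
    Tmap p u (2 * u) x = x + x ^ p ^ u := by
  unfold Tmap
  rw [Nat.mul_div_cancel _ hu]
  rw [Finset.sum_range_succ, Finset.sum_range_one]
  simp

end Aux

theorem stmt19 (p : ℕ) [Fact p.Prime] (hp2 : p ≠ 2) (n k l : ℕ)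
    (hn : 0 < n) (hk : 0 < k) (hl : 0 < l)
    (hlk : l ∣ k) (hkl : Odd (k / l)) (d : ℕ) (hd : d = Nat.gcd n k)
    (hnd : Odd (n / d)) :
    (∀ a ∈ Ffield p n,
      ∀ x₀, x₀ = (2 : AlgebraicClosure (ZMod p))⁻¹ *
          Tmap p l (2 * l) (Smap p k (Nat.lcm n k) a) →
        x₀ ∈ Ffield p n ∧ Smap p l k x₀ = a ∧
        ∀ x ∈ Ffield p n, Smap p l k x = a → x = x₀) ∧
    Set.BijOn (Smap p l k) (Ffield p n) (Ffield p n) := by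
  have hp := Fact.out (p := p.Prime)
  set R := AlgebraicClosure (ZMod p)
  set L := Nat.lcm n k with hLdef
  -- basic arithmetic
  have hdn : d ∣ n := hd ▸ Nat.gcd_dvd_left n k
  have hd0 : 0 < d := hd ▸ Nat.gcd_pos_of_pos_left k hn
  have hnL : n ∣ L := Nat.dvd_lcm_left n k
  have hkL : k ∣ L := Nat.dvd_lcm_right n k
  have hLk : L / k = n / d := by
    have h1 : d * L = n * k := by rw [hd, hLdef]; exact Nat.gcd_mul_lcm n k
    have h2 : L = (n / d) * k := by
      apply Nat.eq_of_mul_eq_mul_left hd0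
      calc d * L = n * k := h1
        _ = (d * (n / d)) * k := by rw [Nat.mul_div_cancel' hdn]
        _ = d * ((n / d) * k) := by ring
    rw [h2, Nat.mul_div_cancel _ hk]
  have hLodd : Odd (L / k) := hLk ▸ hnd
  -- 2 ≠ 0 in R
  have h2ne : (2 : R) ≠ 0 := by
    have : ((2 : ℕ) : R) ≠ 0 := by
      rw [Ne, CharP.cast_eq_zero_iff R p 2]
      intro h
      exact hp2 ((Nat.prime_dvd_prime_iff_eq hp Nat.prime_two).mp h)
    simpa using this
  have hinv2 : (2 : R)⁻¹ * 2 = 1 := inv_mul_cancel₀ h2ne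
  -- the main computation: S_l^k of the candidate equals a
  have main : ∀ a ∈ Ffield p n,
      Smap p l k ((2 : R)⁻¹ * Tmap p l (2 * l) (Smap p k L a)) = a := by
    intro a ha
    set y := Smap p k L a with hy
    rw [tmap_two l hl, smap_half, smap_add_s19, ← smap_pow]
    rw [add_comm (Smap p l k y), telescope l k hlk hkl, hy,
      telescope k L hkL hLodd a, ffield_pow hnL ha]
    have : a + a = 2 * a := by ring
    rw [this, ← mul_assoc, hinv2, one_mul]
  -- the inversion: candidate built from S_l^k x recovers x
  have uniq : ∀ x ∈ Ffield p n,
      (2 : R)⁻¹ * Tmap p l (2 * l) (Smap p k L (Smap p l k x)) = x := by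
    intro x hx
    rw [tmap_two l hl]
    have h0 : Smap p k L ((Smap p l k x) ^ p ^ l + Smap p l k x) = x ^ p ^ L + x := by
      rw [telescope l k hlk hkl, smap_add_s19, ← smap_pow, telescope k L hkL hLodd]
    have h1 : Smap p k L (Smap p l k x) + (Smap p k L (Smap p l k x)) ^ p ^ l
        = x ^ p ^ L + x := by
      rw [smap_pow, ← smap_add_s19, add_comm (Smap p l k x) ((Smap p l k x) ^ p ^ l)]
      exact h0
    rw [h1, ffield_pow hnL hx]
    have : x + x = 2 * x := by ring
    rw [this, ← mul_assoc, hinv2, one_mul]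
  -- membership of the candidate
  have memb : ∀ a ∈ Ffield p n,
      (2 : R)⁻¹ * Tmap p l (2 * l) (Smap p k L a) ∈ Ffield p n := by
    intro a ha
    show ((2 : R)⁻¹ * Tmap p l (2 * l) (Smap p k L a)) ^ p ^ n = _
    rw [mul_pow, two_inv_pow, tmap_pow, smap_pow, ha]
  have mapsto : ∀ x ∈ Ffield p n, Smap p l k x ∈ Ffield p n := by
    intro x hx
    show (Smap p l k x) ^ p ^ n = _
    rw [smap_pow, hx]
  constructor
  · intro a ha x₀ hx₀
    subst hx₀
    refine ⟨memb a ha, main a ha, fun x hx hxa => ?_⟩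
    rw [← hxa, uniq x hx]
  · refine ⟨mapsto, fun x hx y hy hxy => ?_, fun a ha => ?_⟩
    · rw [← uniq x hx, ← uniq y hy, hxy]
    · exact ⟨_, memb a ha, main a ha⟩
end
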